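/- arXiv:2205.09941 — 3 statements merged into one kernel-verified Lean document; each statement's English description precedes it below -/
import Mathlib

section
/- If a metric space X is proper (closed bounded sets are compact) and there is a rectifiable curve connecting two points x, y in X, then there exists a shortest curve connecting x and y, i.e., a curve from x to y whose length equals the infimum of lengths of all curves from x to y. -/
open Set Metric
open scoped ENNReal

/-- A curve from `x` to `y` parameterized on `[0,1]`. -/
def IsCurveOn {X : Type*} [PseudoEMetricSpace X] (γ : ℝ → X) (x y : X) : Prop :=
  ContinuousOn γ (Set.Icc 0 1) ∧ γ 0 = x ∧ γ 1 = y

/-- The set of lengths of curves from `x` to `y`. -/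
def curveLengths {X : Type*} [PseudoEMetricSpace X] (x y : X) : Set ℝ≥0∞ :=
  {ℓ | ∃ γ : ℝ → X, IsCurveOn γ x y ∧ eVariationOn γ (Set.Icc 0 1) = ℓ}

open Filter Topology
open scoped NNReal

section Aux

variable {E : Type*} [PseudoEMetricSpace E]

lemma evar_left_small {f : ℝ → E} {a b : ℝ} (hab : a < b)
    (hf : ContinuousOn f (Icc a b)) (hW : eVariationOn f (Icc a b) ≠ ⊤)
    {ε : ℝ≥0∞} (hε : 0 < ε) : ∃ t ∈ Ico a b, eVariationOn f (Icc t b) ≤ ε := by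
  set W := eVariationOn f (Icc a b) with hWdef
  set G := ⨆ t ∈ Ico a b, eVariationOn f (Icc a t) with hGdef
  have hε4 : (0:ℝ≥0∞) < ε/4 := ENNReal.div_pos hε.ne' (by norm_num)
  have hbmem : b ∈ Icc a b := ⟨hab.le, le_rfl⟩
  have hcont : ∀ᶠ u in nhdsWithin b (Icc a b), edist (f u) (f b) < ε/4 :=
    (EMetric.tendsto_nhds.mp (hf b hbmem)) _ hε4
  obtain ⟨δ, hδ0, hδ⟩ := Metric.mem_nhdsWithin_iff.mp hcont
  have hsub : ∀ t, t ≤ b → eVariationOn f (Icc a t) ≤ W :=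
    fun t ht => eVariationOn.mono f (Icc_subset_Icc le_rfl ht)
  have hG_le : G ≤ W := iSup₂_le fun t ht => hsub t ht.2.le
  -- Step 1 : W ≤ G + ε/4
  have step1 : W ≤ G + ε/4 := by
    rw [hWdef, eVariationOn]
    refine iSup_le ?_
    rintro ⟨n, u, hu, us⟩
    dsimp only
    set t : ℝ := Finset.fold max (max a (b - δ/2))
        u ((Finset.range (n+1)).filter fun i => u i < b) with htdef
    have hta : a ≤ t := le_trans (le_max_left _ _) ((Finset.le_fold_max _).mpr (Or.inl le_rfl))
    have htδ : b - δ/2 ≤ t := le_trans (le_max_right _ _) ((Finset.le_fold_max _).mpr (Or.inl le_rfl))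
    have htb : t < b := by
      rw [htdef, Finset.fold_max_lt]
      exact ⟨max_lt hab (by linarith), fun i hi => (Finset.mem_filter.mp hi).2⟩
    have hui_le : ∀ i, i < n + 1 → u i < b → u i ≤ t := fun i hin hi =>
      (Finset.le_fold_max _).mpr (Or.inr ⟨i, Finset.mem_filter.mpr ⟨Finset.mem_range.mpr hin, hi⟩,
        le_rfl⟩)
    have hclose : edist (f t) (f b) < ε/4 := by
      apply hδ
      constructor
      · rw [Metric.mem_ball, Real.dist_eq, abs_sub_lt_iff]
        constructor <;> linarith
      · exact ⟨hta, htb.le⟩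
    set w : ℕ → ℝ := fun i => min (u i) t with hwdef
    have hw_mono : Monotone w := fun i j hij => min_le_min (hu hij) le_rfl
    have hw_mem : ∀ i, w i ∈ Icc a t := fun i => ⟨le_min (us i).1 hta, min_le_right _ _⟩
    have hsum_w : (∑ i ∈ Finset.range n, edist (f (w (i+1))) (f (w i)))
        ≤ eVariationOn f (Icc a t) := eVariationOn.sum_le (f := f) (n := n) hw_mono hw_mem
    have hterm : ∀ i ∈ Finset.range n, edist (f (u (i+1))) (f (u i)) ≤
        edist (f (w (i+1))) (f (w i))
          + (if u i < b ∧ ¬ u (i+1) < b then ε/4 else 0) := by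
      intro i hi
      rw [Finset.mem_range] at hi
      by_cases h1 : u (i+1) < b
      · have h0 : u i < b := lt_of_le_of_lt (hu (Nat.le_succ i)) h1
        have e1 : w (i+1) = u (i+1) := min_eq_left (hui_le _ (by omega) h1)
        have e2 : w i = u i := min_eq_left (hui_le _ (by omega) h0)
        rw [e1, e2, if_neg (by tauto), add_zero]
      · have hub : u (i+1) = b := le_antisymm (us (i+1)).2 (not_lt.mp h1)
        by_cases h2 : u i < b
        · have e2 : w i = u i := min_eq_left (hui_le _ (by omega) h2)
          have e1 : w (i+1) = t := by rw [hwdef]; dsimp only; rw [hub]; exact min_eq_right htb.le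
          rw [if_pos ⟨h2, h1⟩, e1, e2, hub]
          calc edist (f b) (f (u i)) ≤ edist (f b) (f t) + edist (f t) (f (u i)) :=
                edist_triangle _ _ _
            _ ≤ edist (f t) (f (u i)) + ε/4 := by
                rw [add_comm]
                exact add_le_add_right (by rw [edist_comm]; exact hclose.le) _
        · have hub' : u i = b := le_antisymm (us i).2 (not_lt.mp h2)
          simp [hub, hub']
    have hcard : ((Finset.range n).filter fun i => u i < b ∧ ¬ u (i+1) < b).card ≤ 1 := by
      refine Finset.card_le_one.mpr fun i hi j hj => ?_
      rw [Finset.mem_filter] at hi hj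
      rcases lt_trichotomy i j with h | h | h
      · exact absurd (lt_of_lt_of_le hj.2.1 (le_trans (not_lt.mp hi.2.2) (hu h))) (lt_irrefl _)
      · exact h
      · exact absurd (lt_of_lt_of_le hi.2.1 (le_trans (not_lt.mp hj.2.2) (hu h))) (lt_irrefl _)
    have hsum_c : (∑ i ∈ Finset.range n,
        (if u i < b ∧ ¬ u (i+1) < b then ε/4 else (0:ℝ≥0∞))) ≤ ε/4 := by
      rw [← Finset.sum_filter, Finset.sum_const]
      rcases Nat.le_one_iff_eq_zero_or_eq_one.mp hcard with h | h <;> rw [h] <;> simp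
    calc (∑ i ∈ Finset.range n, edist (f (u (i+1))) (f (u i)))
        ≤ ∑ i ∈ Finset.range n, (edist (f (w (i+1))) (f (w i))
            + (if u i < b ∧ ¬ u (i+1) < b then ε/4 else 0)) := Finset.sum_le_sum hterm
      _ = (∑ i ∈ Finset.range n, edist (f (w (i+1))) (f (w i)))
            + ∑ i ∈ Finset.range n, (if u i < b ∧ ¬ u (i+1) < b then ε/4 else (0:ℝ≥0∞)) :=
          Finset.sum_add_distrib
      _ ≤ eVariationOn f (Icc a t) + ε/4 := add_le_add hsum_w hsum_c
      _ ≤ G + ε/4 := add_le_add_left (le_iSup₂ (f := fun t _ => eVariationOn f (Icc a t)) t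
          ⟨hta, htb⟩) _
  -- Step 2 : find t with G ≤ eVar (Icc a t) + ε/4
  have hGfin : G ≠ ⊤ := fun h => hW (top_le_iff.mp (h ▸ hG_le))
  have step2 : ∃ t ∈ Ico a b, G ≤ eVariationOn f (Icc a t) + ε/4 := by
    by_cases hc : G ≤ ε/4
    · exact ⟨a, ⟨le_rfl, hab⟩, le_trans hc le_add_self⟩
    · push_neg at hc
      have hlt : G - ε/4 < G := ENNReal.sub_lt_self hGfin (hε4.trans hc).ne' hε4.ne'
      rw [hGdef] at hlt
      obtain ⟨t, ht⟩ := lt_iSup_iff.mp hlt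
      obtain ⟨htm, ht2⟩ := lt_iSup_iff.mp ht
      refine ⟨t, htm, ?_⟩
      have h5 := add_le_add_left ht2.le (ε/4)
      rwa [tsub_add_cancel_of_le hc.le] at h5
  obtain ⟨t, htm, ht⟩ := step2
  have hsplit : eVariationOn f (Icc a t) + eVariationOn f (Icc t b) = W := by
    have := eVariationOn.Icc_add_Icc f (s := univ) htm.1 htm.2.le (mem_univ t)
    simpa using this
  have hfin : eVariationOn f (Icc a t) ≠ ⊤ := fun h => hW (top_le_iff.mp (h ▸ hsub t htm.2.le))
  refine ⟨t, htm, ?_⟩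
  have hWle : eVariationOn f (Icc a t) + eVariationOn f (Icc t b)
      ≤ eVariationOn f (Icc a t) + (ε/4 + ε/4) := by
    rw [hsplit, ← add_assoc]
    exact le_trans step1 (add_le_add_left ht _)
  have := (WithTop.add_le_add_iff_left hfin).mp hWle
  refine le_trans this ?_
  rw [ENNReal.div_add_div_same, ← two_mul]
  refine ENNReal.div_le_of_le_mul ?_
  calc 2*ε = ε*2 := mul_comm _ _
    _ ≤ ε*4 := mul_le_mul_right (by norm_num) ε

lemma evar_right_small {f : ℝ → E} {a b : ℝ} (hab : a < b)
    (hf : ContinuousOn f (Icc a b)) (hW : eVariationOn f (Icc a b) ≠ ⊤)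
    {ε : ℝ≥0∞} (hε : 0 < ε) : ∃ t ∈ Ioc a b, eVariationOn f (Icc a t) ≤ ε := by
  set φ : ℝ → ℝ := fun s => a + b - s with hφdef
  have hφanti : ∀ s : Set ℝ, AntitoneOn φ s := fun s u _ v _ huv => by
    simp only [hφdef]; linarith
  have himg : ∀ c d : ℝ, φ '' Icc c d = Icc (a + b - d) (a + b - c) := fun c d => by
    simpa [hφdef] using image_const_sub_Icc (a + b) c d
  have hcomp : ∀ c d : ℝ, eVariationOn (f ∘ φ) (Icc c d)
      = eVariationOn f (Icc (a + b - d) (a + b - c)) := fun c d => by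
    rw [eVariationOn.comp_eq_of_antitoneOn f φ (hφanti _), himg]
  have hgc : ContinuousOn (f ∘ φ) (Icc a b) := by
    refine hf.comp ((continuous_const.sub continuous_id).continuousOn) ?_
    intro s hs
    simp only [hφdef, Function.comp]
    exact ⟨by linarith [hs.2], by linarith [hs.1]⟩
  have hgW : eVariationOn (f ∘ φ) (Icc a b) ≠ ⊤ := by
    rw [hcomp]
    convert hW using 3 <;> ring
  obtain ⟨t, htm, ht⟩ := evar_left_small hab hgc hgW hε
  refine ⟨a + b - t, ⟨by linarith [htm.2], by linarith [htm.1]⟩, ?_⟩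
  rw [hcomp] at ht
  convert ht using 3 <;> ring

/-- intermediate value property for the variation function -/
lemma evar_surj {f : ℝ → E} {a b : ℝ} (hab : a ≤ b)
    (hf : ContinuousOn f (Icc a b)) (hW : eVariationOn f (Icc a b) ≠ ⊤)
    {r : ℝ≥0∞} (hr : r ≤ eVariationOn f (Icc a b)) :
    ∃ t ∈ Icc a b, eVariationOn f (Icc a t) = r := by
  set S : Set ℝ := {u | u ∈ Icc a b ∧ eVariationOn f (Icc a u) ≤ r} with hSdef
  have haS : a ∈ S := by
    refine ⟨⟨le_rfl, hab⟩, ?_⟩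
    rw [Icc_self]
    simp [eVariationOn.subsingleton f (subsingleton_singleton)]
  have hSne : S.Nonempty := ⟨a, haS⟩
  have hSbdd : BddAbove S := ⟨b, fun u hu => hu.1.2⟩
  set t := sSup S with htdef
  have hat : a ≤ t := le_csSup hSbdd haS
  have htb : t ≤ b := csSup_le hSne fun u hu => hu.1.2
  have hsplit : ∀ c d : ℝ, a ≤ c → c ≤ d → d ≤ b →
      eVariationOn f (Icc a c) + eVariationOn f (Icc c d) = eVariationOn f (Icc a d) := by
    intro c d h1 h2 h3
    have := eVariationOn.Icc_add_Icc f (s := univ) h1 h2 (mem_univ c)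
    simpa using this
  have hmono : ∀ c d : ℝ, c ≤ d → eVariationOn f (Icc a c) ≤ eVariationOn f (Icc a d) :=
    fun c d h => eVariationOn.mono f (Icc_subset_Icc le_rfl h)
  have hfin : ∀ c ∈ Icc a b, eVariationOn f (Icc a c) ≠ ⊤ := fun c hc h =>
    hW (top_le_iff.mp (h ▸ hmono c b hc.2))
  have hrfin : r < ⊤ := lt_of_le_of_lt hr (lt_top_iff_ne_top.mpr hW)
  refine ⟨t, ⟨hat, htb⟩, le_antisymm ?_ ?_⟩
  · -- eVar (Icc a t) ≤ r
    rcases eq_or_lt_of_le hat with heq | hlt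
    · rw [← heq, Icc_self]
      simpa [eVariationOn.subsingleton f (subsingleton_singleton)] using zero_le r
    · refine ENNReal.le_of_forall_pos_le_add fun ε hε _ => ?_
      have hfc : ContinuousOn f (Icc a t) := hf.mono (Icc_subset_Icc le_rfl htb)
      have hWt : eVariationOn f (Icc a t) ≠ ⊤ := hfin t ⟨hat, htb⟩
      obtain ⟨t', ht'm, ht'⟩ := evar_left_small hlt hfc hWt
        (ε := ε) (by exact_mod_cast hε)
      obtain ⟨v, hvS, hv⟩ := exists_lt_of_lt_csSup hSne ht'm.2
      have hvt : v ≤ t := le_csSup hSbdd hvS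
      calc eVariationOn f (Icc a t)
          = eVariationOn f (Icc a v) + eVariationOn f (Icc v t) :=
            (hsplit v t hvS.1.1 hvt htb).symm
        _ ≤ r + eVariationOn f (Icc t' t) :=
            add_le_add hvS.2 (eVariationOn.mono f (Icc_subset_Icc hv.le le_rfl))
        _ ≤ r + ε := add_le_add_right ht' _
  · -- r ≤ eVar (Icc a t)
    rcases eq_or_lt_of_le htb with heq | hlt
    · rw [heq]; exact hr
    · refine ENNReal.le_of_forall_pos_le_add fun ε hε _ => ?_
      have hfc : ContinuousOn f (Icc t b) := hf.mono (Icc_subset_Icc hat le_rfl)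
      have hWt : eVariationOn f (Icc t b) ≠ ⊤ := fun h =>
        hW (top_le_iff.mp (h ▸ eVariationOn.mono f (Icc_subset_Icc hat le_rfl)))
      obtain ⟨v, hvm, hv⟩ := evar_right_small hlt hfc hWt (ε := ε) (by exact_mod_cast hε)
      have hvnS : v ∉ S := fun hvS => absurd (le_csSup hSbdd hvS) (not_le.mpr hvm.1)
      have hvr : r < eVariationOn f (Icc a v) := by
        by_contra hcon
        exact hvnS ⟨⟨hat.trans hvm.1.le, hvm.2⟩, not_lt.mp hcon⟩
      calc r ≤ eVariationOn f (Icc a v) := hvr.le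
        _ = eVariationOn f (Icc a t) + eVariationOn f (Icc t v) :=
            (hsplit t v hat hvm.1.le hvm.2).symm
        _ ≤ eVariationOn f (Icc a t) + ε := add_le_add_right hv _

lemma exists_reparam {X : Type*} [MetricSpace X] {γ : ℝ → X} {x y : X}
    (hγ : IsCurveOn γ x y) (hfin : eVariationOn γ (Icc 0 1) ≠ ⊤) :
    ∃ γ' : ℝ → X, IsCurveOn γ' x y ∧
      eVariationOn γ' (Icc 0 1) ≤ eVariationOn γ (Icc 0 1) ∧
      LipschitzWith (eVariationOn γ (Icc 0 1)).toNNReal γ' ∧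
      ∀ t, dist (γ' t) x ≤ (eVariationOn γ (Icc 0 1)).toReal := by
  set s : Set ℝ := Icc (0:ℝ) 1 with hsdef
  have h01 : (0:ℝ) ∈ s := ⟨le_rfl, zero_le_one⟩
  have h11 : (1:ℝ) ∈ s := ⟨zero_le_one, le_rfl⟩
  have hBV : LocallyBoundedVariationOn γ s :=
    BoundedVariationOn.locallyBoundedVariationOn hfin
  set L : ℝ := (eVariationOn γ s).toReal with hLdef
  have hL0 : 0 ≤ L := ENNReal.toReal_nonneg
  set v : ℝ → ℝ := variationOnFromTo γ s 0 with hvdef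
  set p : ℝ → X := naturalParameterization γ s 0 with hpdef
  have hunit : HasUnitSpeedOn p (v '' s) := has_unit_speed_naturalParameterization γ hBV h01
  have hpv : ∀ c ∈ s, p (v c) = γ c := fun c hc =>
    edist_eq_zero.mp (edist_naturalParameterization_eq_zero hBV h01 hc)
  have hv0 : v 0 = 0 := variationOnFromTo.self γ s 0
  have hv1 : v 1 = L := by
    rw [hvdef]
    rw [variationOnFromTo.eq_of_le γ s zero_le_one, ← hsdef, Set.inter_self]
  have hsurj : Icc 0 L ⊆ v '' s := by
    rintro r ⟨hr0, hrL⟩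
    have hle : ENNReal.ofReal r ≤ eVariationOn γ (Icc 0 1) := by
      rw [← ENNReal.ofReal_toReal hfin]
      exact ENNReal.ofReal_le_ofReal hrL
    obtain ⟨c, hc, hcr⟩ := evar_surj zero_le_one hγ.1 hfin hle
    refine ⟨c, hc, ?_⟩
    rw [hvdef]
    rw [variationOnFromTo.eq_of_le γ s hc.1,
      show s ∩ Icc 0 c = Icc 0 c from inter_eq_self_of_subset_right
        (Icc_subset_Icc le_rfl hc.2), hcr, ENNReal.toReal_ofReal hr0]
  have hplip : ∀ r1 ∈ Icc 0 L, ∀ r2 ∈ Icc 0 L, r1 ≤ r2 →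
      edist (p r1) (p r2) ≤ ENNReal.ofReal (r2 - r1) := by
    intro r1 h1 r2 h2 h12
    have m1 : r1 ∈ v '' s ∩ Icc r1 r2 := ⟨hsurj h1, le_rfl, h12⟩
    have m2 : r2 ∈ v '' s ∩ Icc r1 r2 := ⟨hsurj h2, h12, le_rfl⟩
    calc edist (p r1) (p r2) ≤ eVariationOn p (v '' s ∩ Icc r1 r2) :=
        eVariationOn.edist_le p m1 m2
      _ = ENNReal.ofReal (r2 - r1) := by
          rw [hunit (hsurj h1) (hsurj h2)]
          norm_num
  set c : ℝ → ℝ := fun t => max 0 (min t 1) with hcdef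
  have hc_mem : ∀ t, c t ∈ Icc (0:ℝ) 1 := fun t =>
    ⟨le_max_left _ _, max_le zero_le_one (min_le_right _ _)⟩
  have hc_mono : Monotone c := fun u w h => max_le_max le_rfl (min_le_min h le_rfl)
  have hc_lip : ∀ u w : ℝ, u ≤ w → c w - c u ≤ w - u := by
    intro u w h
    have hmin : min w 1 ≤ min u 1 + (w - u) := by
      rcases le_total u 1 with h1 | h1
      · rw [min_eq_left h1]; linarith [min_le_left w 1]
      · rw [min_eq_right h1]; linarith [min_le_right w 1]
    have h2 : max 0 (min w 1) ≤ max 0 (min u 1) + (w - u) :=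
      max_le (by linarith [le_max_left 0 (min u 1)]) (by linarith [le_max_right 0 (min u 1)])
    simp only [hcdef]
    linarith
  set γ' : ℝ → X := fun t => p (L * c t) with hγ'def
  have hLc_mem : ∀ t, L * c t ∈ Icc 0 L := fun t =>
    ⟨mul_nonneg hL0 (hc_mem t).1, mul_le_of_le_one_right hL0 (hc_mem t).2⟩
  set K : ℝ≥0 := (eVariationOn γ (Icc 0 1)).toNNReal with hKdef
  have hKcoe : (K : ℝ≥0∞) = eVariationOn γ (Icc 0 1) := ENNReal.coe_toNNReal hfin
  have hofL : ENNReal.ofReal L = eVariationOn γ (Icc 0 1) := ENNReal.ofReal_toReal hfin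
  have hγ'lip : LipschitzWith K γ' := by
    intro t1 t2
    wlog h : t1 ≤ t2 generalizing t1 t2
    · rw [edist_comm, edist_comm t1 t2]
      exact this t2 t1 (le_of_not_ge h)
    have hle : L * c t1 ≤ L * c t2 := mul_le_mul_of_nonneg_left (hc_mono h) hL0
    calc edist (γ' t1) (γ' t2) ≤ ENNReal.ofReal (L * c t2 - L * c t1) :=
        hplip _ (hLc_mem t1) _ (hLc_mem t2) hle
      _ ≤ ENNReal.ofReal (L * (t2 - t1)) := ENNReal.ofReal_le_ofReal (by
          have := hc_lip t1 t2 h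
          nlinarith)
      _ = ENNReal.ofReal L * ENNReal.ofReal (t2 - t1) := ENNReal.ofReal_mul hL0
      _ = (K : ℝ≥0∞) * edist t1 t2 := by
          rw [hofL, ← hKcoe, edist_dist, Real.dist_eq, abs_sub_comm,
            abs_of_nonneg (by linarith : (0:ℝ) ≤ t2 - t1)]
  have hc0 : c 0 = 0 := by simp [hcdef]
  have hc1 : c 1 = 1 := by simp [hcdef]
  have hγ'0 : γ' 0 = x := by
    show p (L * c 0) = x
    rw [hc0, mul_zero, ← hv0, hpv 0 h01, hγ.2.1]
  have hγ'1 : γ' 1 = y := by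
    show p (L * c 1) = y
    rw [hc1, mul_one, ← hv1, hpv 1 h11, hγ.2.2]
  have hvar : eVariationOn γ' (Icc 0 1) ≤ eVariationOn γ (Icc 0 1) := by
    have hlip' : LipschitzOnWith K γ' (univ : Set ℝ) := hγ'lip.lipschitzOnWith
    have hcomp := hlip'.comp_eVariationOn_le (mapsTo_univ id (Icc (0:ℝ) 1))
    rw [Function.comp_id] at hcomp
    have hid : eVariationOn (id : ℝ → ℝ) (Icc 0 1) ≤ ENNReal.ofReal 1 := by
      have hmono : MonotoneOn (id : ℝ → ℝ) (Icc 0 1) := fun a _ b _ h => h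
      have := hmono.eVariationOn_le h01 h11
      simpa using this
    calc eVariationOn γ' (Icc 0 1) ≤ K * eVariationOn id (Icc 0 1) := hcomp
      _ ≤ K * ENNReal.ofReal 1 := mul_le_mul_right hid _
      _ = K := by rw [ENNReal.ofReal_one, mul_one]
      _ = eVariationOn γ (Icc 0 1) := hKcoe
  refine ⟨γ', ⟨hγ'lip.continuous.continuousOn, hγ'0, hγ'1⟩, hvar, hγ'lip, ?_⟩
  intro t
  have hed : edist (γ' 0) (γ' t) ≤ ENNReal.ofReal (L * c t - L * c 0) := by
    rw [hγ'def]
    exact hplip _ (hLc_mem 0) _ (hLc_mem t) (by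
      rw [hc0, mul_zero]
      exact (hLc_mem t).1)
  rw [← hγ'0, dist_comm, dist_edist]
  calc (edist (γ' 0) (γ' t)).toReal ≤ (ENNReal.ofReal (L * c t - L * c 0)).toReal :=
      ENNReal.toReal_mono ENNReal.ofReal_ne_top hed
    _ = L * c t - L * c 0 := ENNReal.toReal_ofReal (by
        rw [hc0, mul_zero, sub_zero]
        exact (hLc_mem t).1)
    _ ≤ L := by
        rw [hc0, mul_zero, sub_zero]
        exact (hLc_mem t).2

end Aux

/-- In a proper metric space, if two points can be connected by a rectifiable curve,
then there is a shortest curve connecting them. -/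
theorem exists_shortest_curve {X : Type*} [MetricSpace X] [ProperSpace X] (x y : X)
    (h : ∃ γ : ℝ → X, IsCurveOn γ x y ∧ eVariationOn γ (Set.Icc 0 1) ≠ ⊤) :
    ∃ γ : ℝ → X, IsCurveOn γ x y ∧
      eVariationOn γ (Set.Icc 0 1) = sInf (curveLengths x y) := by
  obtain ⟨γ₀, hγ₀, hfin₀⟩ := h
  set I : ℝ≥0∞ := sInf (curveLengths x y) with hIdef
  have hImem : I ≤ eVariationOn γ₀ (Icc 0 1) := sInf_le ⟨γ₀, hγ₀, rfl⟩
  have hIne : I ≠ ⊤ := fun hI => hfin₀ (top_le_iff.mp (hI ▸ hImem))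
  set M : ℝ≥0 := I.toNNReal + 1 with hMdef
  -- construct minimizing sequence of uniformly Lipschitz curves
  have H : ∀ n : ℕ, ∃ g : ℝ → X, IsCurveOn g x y ∧
      eVariationOn g (Icc 0 1) ≤ I + ((n : ℝ≥0∞) + 1)⁻¹ ∧
      LipschitzWith M g ∧ ∀ t, g t ∈ closedBall x M := by
    intro n
    have hinv0 : ((n : ℝ≥0∞) + 1)⁻¹ ≠ 0 := ENNReal.inv_ne_zero.mpr (by
      exact ENNReal.add_ne_top.mpr ⟨ENNReal.natCast_ne_top n, ENNReal.one_ne_top⟩)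
    have hlt : I < I + ((n : ℝ≥0∞) + 1)⁻¹ := ENNReal.lt_add_right hIne hinv0
    obtain ⟨ℓ, hℓmem, hℓlt⟩ := sInf_lt_iff.mp hlt
    obtain ⟨γn, hγn, hγnℓ⟩ := hℓmem
    have hinv1 : ((n : ℝ≥0∞) + 1)⁻¹ ≤ 1 := ENNReal.inv_le_one.mpr (le_add_self)
    have hfinn : eVariationOn γn (Icc 0 1) ≠ ⊤ := by
      rw [hγnℓ]
      exact ne_top_of_lt hℓlt
    obtain ⟨g, hgc, hgvar, hglip, hgball⟩ := exists_reparam hγn hfinn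
    have hvar_le : eVariationOn γn (Icc 0 1) ≤ I + 1 := by
      rw [hγnℓ]
      exact le_trans hℓlt.le (add_le_add_right hinv1 _)
    have hI1ne : I + 1 ≠ ⊤ := ENNReal.add_ne_top.mpr ⟨hIne, ENNReal.one_ne_top⟩
    have hKle : (eVariationOn γn (Icc 0 1)).toNNReal ≤ M := by
      rw [hMdef, show I.toNNReal + 1 = (I + 1).toNNReal by
        rw [ENNReal.toNNReal_add hIne ENNReal.one_ne_top, ENNReal.toNNReal_one]]
      exact ENNReal.toNNReal_mono hI1ne hvar_le
    refine ⟨g, hgc, le_trans hgvar (by rw [hγnℓ]; exact hℓlt.le), hglip.weaken hKle, fun t => ?_⟩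
    rw [mem_closedBall]
    refine le_trans (hgball t) ?_
    have : (eVariationOn γn (Icc 0 1)).toReal ≤ (I + 1).toReal :=
      ENNReal.toReal_mono hI1ne hvar_le
    refine le_trans this ?_
    rw [ENNReal.toReal_add hIne ENNReal.one_ne_top, ENNReal.toReal_one, hMdef, NNReal.coe_add,
      NNReal.coe_one]
    exact le_of_eq rfl
  choose Γ hcurve hvar hlip hball using H
  -- the compact set of candidate limit curves
  set S : Set (ℝ → X) := {g : ℝ → X | (∀ t, g t ∈ closedBall x M) ∧ LipschitzWith M g ∧
      g 0 = x ∧ g 1 = y} with hSdef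
  have hC : IsCompact {g : ℝ → X | ∀ t, g t ∈ closedBall x M} :=
    isCompact_pi_infinite fun _ => isCompact_closedBall x M
  have hA : IsClosed {g : ℝ → X | ∀ t, g t ∈ closedBall x M} := by
    rw [setOf_forall]
    exact isClosed_iInter fun t => Metric.isClosed_closedBall.preimage (continuous_apply t)
  have hB : IsClosed {g : ℝ → X | LipschitzWith M g} := by
    have heq : {g : ℝ → X | LipschitzWith M g}
        = ⋂ (u : ℝ), ⋂ (w : ℝ), {g : ℝ → X | edist (g u) (g w) ≤ M * edist u w} := by
      ext g
      simp only [mem_setOf_eq, mem_iInter]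
      exact ⟨fun hg u w => hg u w, fun hg u w => hg u w⟩
    rw [heq]
    exact isClosed_iInter fun u => isClosed_iInter fun w =>
      isClosed_le ((continuous_apply u).edist (continuous_apply w)) continuous_const
  have hD0 : IsClosed {g : ℝ → X | g 0 = x} := isClosed_eq (continuous_apply 0) continuous_const
  have hD1 : IsClosed {g : ℝ → X | g 1 = y} := isClosed_eq (continuous_apply 1) continuous_const
  have hclosed : IsClosed S :=
    hA.inter (hB.inter (hD0.inter hD1))
  have hS : IsCompact S := hC.of_isClosed_subset hclosed fun g hg => hg.1
  have hmemS : ∀ n, Γ n ∈ S := fun n => ⟨hball n, hlip n, (hcurve n).2.1, (hcurve n).2.2⟩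
  have hle : Filter.map Γ atTop ≤ 𝓟 S := by
    rw [Filter.le_principal_iff, Filter.mem_map]
    exact Filter.Eventually.of_forall hmemS
  obtain ⟨g, hgS, hgcl⟩ := hS.exists_clusterPt hle
  set p : Filter ℕ := atTop ⊓ Filter.comap Γ (𝓝 g) with hpdef
  have hpne : p.NeBot := by
    have h1 : (𝓝 g ⊓ Filter.map Γ atTop).NeBot := hgcl
    have h2 : (Filter.map Γ p).NeBot := by
      rw [hpdef, Filter.push_pull, inf_comm]
      exact h1
    exact (Filter.map_neBot_iff Γ).mp h2
  have hptend : Tendsto Γ p (𝓝 g) := tendsto_iff_comap.mpr inf_le_right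
  have hpt : ∀ t ∈ Icc (0:ℝ) 1, Tendsto (fun n => Γ n t) p (𝓝 (g t)) :=
    fun t _ => ((continuous_apply t).tendsto g).comp hptend
  have hgvar : eVariationOn g (Icc 0 1) ≤ I := by
    by_contra hcon
    push_neg at hcon
    obtain ⟨m, hm1, hm2⟩ := exists_between hcon
    have hev1 : ∀ᶠ n in p, m < eVariationOn (Γ n) (Icc 0 1) :=
      eVariationOn.lowerSemicontinuous_aux hpt hm2
    have hmI : (0:ℝ≥0∞) < m - I := tsub_pos_of_lt hm1
    obtain ⟨N, hN⟩ := ENNReal.exists_inv_nat_lt hmI.ne'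
    have hev2 : ∀ᶠ n in p, eVariationOn (Γ n) (Icc 0 1) ≤ m := by
      refine Filter.Eventually.filter_mono inf_le_left ?_
      filter_upwards [Filter.eventually_ge_atTop N] with n hn
      refine le_trans (hvar n) ?_
      have hinv : ((n : ℝ≥0∞) + 1)⁻¹ ≤ ((N : ℝ≥0∞))⁻¹ := by
        rw [ENNReal.inv_le_inv]
        have hcast : (N : ℝ≥0∞) ≤ (n : ℝ≥0∞) := by exact_mod_cast hn
        exact le_trans hcast le_self_add
      calc I + ((n : ℝ≥0∞) + 1)⁻¹ ≤ I + (m - I) :=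
          add_le_add_right (le_trans hinv hN.le) _
        _ = m := add_tsub_cancel_of_le hm1.le
    obtain ⟨n, hn1, hn2⟩ := (hev1.and hev2).exists
    exact absurd hn2 (not_le.mpr hn1)
  have hgcurve : IsCurveOn g x y := ⟨hgS.2.1.continuous.continuousOn, hgS.2.2.1, hgS.2.2.2⟩
  exact ⟨g, hgcurve, le_antisymm hgvar (sInf_le ⟨g, hgcurve, rfl⟩)⟩
end

section
/- If two distinct points x, y of a metric space X can be connected by a rectifiable curve γ with image Γ, then there is a rectifiable arc (homeomorphic image of [0,1]) contained in Γ with endpoints x and y, of length at most ℓ(γ). -/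
open Set Metric
open scoped ENNReal NNReal

section Helpers

variable {X : Type*} [MetricSpace X]

lemma edist_real (p q : ℝ) : edist p q = ENNReal.ofReal |p - q| := by
  rw [edist_dist, Real.dist_eq]

lemma lipschitzOnWith_of_ordered {f : ℝ → X} {s : Set ℝ} {C : ℝ≥0}
    (h : ∀ u ∈ s, ∀ w ∈ s, u ≤ w → edist (f u) (f w) ≤ C * edist u w) :
    LipschitzOnWith C f s := by
  intro u hu w hw
  rcases le_total u w with huw | hwu
  · exact h u hu w hw huw
  · rw [edist_comm, edist_comm u w]
    exact h w hw u hu hwu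

lemma HasConstantSpeedOnWith.lipschitzOnWith' {f : ℝ → X} {s : Set ℝ} {l : ℝ≥0}
    (h : HasConstantSpeedOnWith f s l) : LipschitzOnWith l f s := by
  apply lipschitzOnWith_of_ordered
  intro u hu w hw huw
  calc edist (f u) (f w) ≤ eVariationOn f (s ∩ Icc u w) :=
        eVariationOn.edist_le f ⟨hu, le_rfl, huw⟩ ⟨hw, huw, le_rfl⟩
    _ = ENNReal.ofReal ((l : ℝ) * (w - u)) := h hu hw
    _ = (l : ℝ≥0∞) * edist u w := by
        rw [edist_real, abs_sub_comm, abs_of_nonneg (sub_nonneg.mpr huw),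
          ENNReal.ofReal_mul l.coe_nonneg, ENNReal.ofReal_coe_nnreal]

lemma eVariationOn_lowerSemicontinuous_pi (s : Set ℝ) :
    LowerSemicontinuous (fun g : ℝ → X => eVariationOn g s) := by
  intro g v hv
  exact eVariationOn.lowerSemicontinuous_aux (F := id) (p := nhds g)
    (fun t _ => ((continuous_apply t).tendsto g)) hv

lemma exists_min_of_lsc {β : Type*} [TopologicalSpace β] {K : Set β} (hK : IsCompact K)
    (hKc : IsClosed K) (hne : K.Nonempty) {φ : β → ℝ≥0∞} (hφ : LowerSemicontinuous φ) :
    ∃ g ∈ K, ∀ h ∈ K, φ g ≤ φ h := by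
  set m := ⨅ h ∈ K, φ h with hm
  have hle : ∀ h ∈ K, m ≤ φ h := fun h hh => iInf₂_le h hh
  by_cases htop : m = ⊤
  · obtain ⟨g, hg⟩ := hne
    refine ⟨g, hg, fun h hh => ?_⟩
    have : (⊤ : ℝ≥0∞) ≤ φ h := htop ▸ hle h hh
    simp [top_le_iff.mp this]
  · have hne' : Nonempty (Ioi m) := ⟨⟨m + 1, ENNReal.lt_add_right htop one_ne_zero⟩⟩
    set C : Ioi m → Set β := fun r => K ∩ φ ⁻¹' Iic (r : ℝ≥0∞) with hC
    have hCne : ∀ r, (C r).Nonempty := by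
      rintro ⟨r, hr⟩
      have h1 : m < r := hr
      rw [hm] at h1
      obtain ⟨h, hh⟩ := iInf_lt_iff.mp h1
      obtain ⟨hhK, hlt⟩ := iInf_lt_iff.mp hh
      exact ⟨h, hhK, hlt.le⟩
    have hCcl : ∀ r, IsClosed (C r) := fun r => hKc.inter (hφ.isClosed_preimage r)
    have hCcp : ∀ r, IsCompact (C r) := fun r => hK.inter_right (hφ.isClosed_preimage r)
    have hdir : Directed (· ⊇ ·) C := by
      rintro ⟨r, hr⟩ ⟨r', hr'⟩
      refine ⟨⟨min r r', mem_Ioi.mpr (lt_min (mem_Ioi.mp hr) (mem_Ioi.mp hr'))⟩, ?_, ?_⟩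
      · intro g hg
        exact ⟨hg.1, by simpa using le_trans (by simpa using hg.2 : φ g ≤ min r r') (min_le_left r r')⟩
      · intro g hg
        exact ⟨hg.1, by simpa using le_trans (by simpa using hg.2 : φ g ≤ min r r') (min_le_right r r')⟩
    obtain ⟨g, hg⟩ := IsCompact.nonempty_iInter_of_directed_nonempty_isCompact_isClosed
      C hdir hCne hCcp hCcl
    have hgK : g ∈ K := (mem_iInter.mp hg ⟨m + 1, ENNReal.lt_add_right htop one_ne_zero⟩).1
    refine ⟨g, hgK, fun h hh => ?_⟩
    have : φ g ≤ m := by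
      apply le_of_forall_gt_imp_ge_of_dense
      intro r hr
      exact (mem_iInter.mp hg ⟨r, hr⟩).2
    exact this.trans (hle h hh)

end Helpers
section SmallVar

open Filter Topology

variable {X : Type*} [MetricSpace X]

lemma exists_evar_small_right {f : ℝ → X} {a b : ℝ} (hab : a < b)
    (hf : ContinuousOn f (Icc a b)) (hbv : eVariationOn f (Icc a b) ≠ ⊤)
    {ε : ℝ≥0∞} (hε : 0 < ε) :
    ∃ t, a < t ∧ t ≤ b ∧ eVariationOn f (Icc a t) ≤ ε := by
  by_cases hV : eVariationOn f (Icc a b) ≤ ε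
  · exact ⟨b, hab, le_rfl, hV⟩
  push_neg at hV
  -- pointwise convergence of `fun u => f (max u t)` to `f` as `t → a⁺`
  have hNB : (𝓝[Ioc a b] a).NeBot := by
    rw [← mem_closure_iff_nhdsWithin_neBot, closure_Ioc hab.ne]
    exact ⟨le_rfl, hab.le⟩
  have hptw : ∀ u ∈ Icc a b,
      Tendsto (fun t => f (max u t)) (𝓝[Ioc a b] a) (𝓝 (f u)) := by
    intro u hu
    rcases eq_or_lt_of_le hu.1 with rfl | hau
    · have h1 : Tendsto f (𝓝[Ioc a b] a) (𝓝 (f a)) :=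
        Filter.Tendsto.mono_left (hf a hu) (nhdsWithin_mono a Ioc_subset_Icc_self)
      apply Tendsto.congr' _ h1
      filter_upwards [self_mem_nhdsWithin] with t ht
      rw [max_eq_right ht.1.le]
    · have hev : ∀ᶠ t in 𝓝[Ioc a b] a, max u t = u := by
        filter_upwards [nhdsWithin_le_nhds (Iio_mem_nhds hau)] with t ht
        exact max_eq_left ht.le
      exact Tendsto.congr' (by filter_upwards [hev] with t ht; rw [ht]) tendsto_const_nhds
  have key := eVariationOn.lowerSemicontinuous_aux
    (F := fun t u => f (max u t)) (p := 𝓝[Ioc a b] a) hptw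
    (v := eVariationOn f (Icc a b) - ε)
    (ENNReal.sub_lt_self hbv (fun h0 => (hε.trans hV).ne' h0) hε.ne')
  obtain ⟨t, hlt, ht⟩ := (key.and self_mem_nhdsWithin).exists
  -- rewrite the variation of the truncated function
  have himg : (fun u => max u t) '' Icc a b = Icc t b := by
    apply Subset.antisymm
    · rintro _ ⟨u, ⟨_, hu2⟩, rfl⟩
      exact ⟨le_max_right _ _, max_le hu2 ht.2⟩
    · rintro w ⟨hw1, hw2⟩
      exact ⟨w, ⟨ht.1.le.trans hw1, hw2⟩, max_eq_left hw1⟩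
  have hmono : MonotoneOn (fun u => max u t) (Icc a b) :=
    fun u _ w _ huw => max_le_max huw le_rfl
  have hre : eVariationOn (fun u => f (max u t)) (Icc a b) = eVariationOn f (Icc t b) := by
    have := eVariationOn.comp_eq_of_monotoneOn f _ hmono
    rw [himg] at this
    exact this
  rw [hre] at hlt
  -- additivity and conclusion
  have hadd : eVariationOn f (Icc a t) + eVariationOn f (Icc t b) = eVariationOn f (Icc a b) := by
    have := eVariationOn.Icc_add_Icc f (s := univ) ht.1.le ht.2 (mem_univ t)
    simpa [univ_inter] using this
  have hYfin : eVariationOn f (Icc t b) ≠ ⊤ := by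
    intro h
    rw [← hadd, h, add_top] at hbv
    exact hbv rfl
  have h2 : eVariationOn f (Icc a b) ≤ eVariationOn f (Icc t b) + ε :=
    tsub_le_iff_right.mp hlt.le
  refine ⟨t, ht.1, ht.2, ?_⟩
  have h3 : eVariationOn f (Icc a t) + eVariationOn f (Icc t b) ≤ ε + eVariationOn f (Icc t b) := by
    rw [hadd]
    calc eVariationOn f (Icc a b) ≤ eVariationOn f (Icc t b) + ε := h2
      _ = ε + eVariationOn f (Icc t b) := add_comm _ _
  exact (ENNReal.add_le_add_iff_right hYfin).mp h3

end SmallVar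
section SmallVarLeft

open Filter Topology

variable {X : Type*} [MetricSpace X]

lemma exists_evar_small_left {f : ℝ → X} {a b : ℝ} (hab : a < b)
    (hf : ContinuousOn f (Icc a b)) (hbv : eVariationOn f (Icc a b) ≠ ⊤)
    {ε : ℝ≥0∞} (hε : 0 < ε) :
    ∃ t, a ≤ t ∧ t < b ∧ eVariationOn f (Icc t b) ≤ ε := by
  by_cases hV : eVariationOn f (Icc a b) ≤ ε
  · exact ⟨a, le_rfl, hab, hV⟩
  push_neg at hV
  have hNB : (𝓝[Ico a b] b).NeBot := by
    rw [← mem_closure_iff_nhdsWithin_neBot, closure_Ico hab.ne]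
    exact ⟨hab.le, le_rfl⟩
  have hptw : ∀ u ∈ Icc a b,
      Tendsto (fun t => f (min u t)) (𝓝[Ico a b] b) (𝓝 (f u)) := by
    intro u hu
    rcases eq_or_lt_of_le hu.2 with rfl | hub
    · have h1 : Tendsto f (𝓝[Ico a u] u) (𝓝 (f u)) :=
        Filter.Tendsto.mono_left (hf u hu) (nhdsWithin_mono u Ico_subset_Icc_self)
      apply Tendsto.congr' _ h1
      filter_upwards [self_mem_nhdsWithin] with t ht
      rw [min_eq_right ht.2.le]
    · have hev : ∀ᶠ t in 𝓝[Ico a b] b, min u t = u := by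
        filter_upwards [nhdsWithin_le_nhds (Ioi_mem_nhds hub)] with t ht
        exact min_eq_left ht.le
      exact Tendsto.congr' (by filter_upwards [hev] with t ht; rw [ht]) tendsto_const_nhds
  have key := eVariationOn.lowerSemicontinuous_aux
    (F := fun t u => f (min u t)) (p := 𝓝[Ico a b] b) hptw
    (v := eVariationOn f (Icc a b) - ε)
    (ENNReal.sub_lt_self hbv (fun h0 => (hε.trans hV).ne' h0) hε.ne')
  obtain ⟨t, hlt, ht⟩ := (key.and self_mem_nhdsWithin).exists
  have himg : (fun u => min u t) '' Icc a b = Icc a t := by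
    apply Subset.antisymm
    · rintro _ ⟨u, ⟨hu1, _⟩, rfl⟩
      exact ⟨le_min hu1 ht.1, min_le_right _ _⟩
    · rintro w ⟨hw1, hw2⟩
      exact ⟨w, ⟨hw1, hw2.trans ht.2.le⟩, min_eq_left hw2⟩
  have hmono : MonotoneOn (fun u => min u t) (Icc a b) :=
    fun u _ w _ huw => min_le_min huw le_rfl
  have hre : eVariationOn (fun u => f (min u t)) (Icc a b) = eVariationOn f (Icc a t) := by
    have := eVariationOn.comp_eq_of_monotoneOn f _ hmono
    rw [himg] at this
    exact this
  rw [hre] at hlt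
  have hadd : eVariationOn f (Icc a t) + eVariationOn f (Icc t b) = eVariationOn f (Icc a b) := by
    have := eVariationOn.Icc_add_Icc f (s := univ) ht.1 ht.2.le (mem_univ t)
    simpa [univ_inter] using this
  have hYfin : eVariationOn f (Icc a t) ≠ ⊤ := by
    intro h
    rw [← hadd, h, top_add] at hbv
    exact hbv rfl
  have h2 : eVariationOn f (Icc a b) ≤ eVariationOn f (Icc a t) + ε :=
    tsub_le_iff_right.mp hlt.le
  refine ⟨t, ht.1, ht.2, ?_⟩
  have h3 : eVariationOn f (Icc t b) + eVariationOn f (Icc a t)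
      ≤ ε + eVariationOn f (Icc a t) := by
    rw [add_comm, hadd]
    calc eVariationOn f (Icc a b) ≤ eVariationOn f (Icc a t) + ε := h2
      _ = ε + eVariationOn f (Icc a t) := add_comm _ _
  exact (ENNReal.add_le_add_iff_right hYfin).mp h3

end SmallVarLeft
section Continuity

open Filter Topology

variable {X : Type*} [MetricSpace X]

lemma continuousOn_variationOnFromTo {f : ℝ → X} (hf : ContinuousOn f (Icc 0 1))
    (hbv : eVariationOn f (Icc (0:ℝ) 1) ≠ ⊤) :
    ContinuousOn (variationOnFromTo f (Icc 0 1) 0) (Icc 0 1) := by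
  have h0s : (0:ℝ) ∈ Icc (0:ℝ) 1 := ⟨le_rfl, zero_le_one⟩
  have hlbv : LocallyBoundedVariationOn f (Icc (0:ℝ) 1) :=
    BoundedVariationOn.locallyBoundedVariationOn hbv
  intro p hp
  rw [Metric.continuousWithinAt_iff]
  intro ε hε
  have hεR : (0:ℝ≥0∞) < ENNReal.ofReal (ε/2) := ENNReal.ofReal_pos.mpr (by linarith)
  obtain ⟨tp, hpt, hpl⟩ : ∃ tp, p < tp ∧ ∀ u ∈ Icc (0:ℝ) 1, p ≤ u → u ≤ tp →
      (eVariationOn f (Icc 0 1 ∩ Icc p u)).toReal < ε := by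
    rcases lt_or_ge p 1 with hp1 | hp1
    · obtain ⟨t, h1, h2, h3⟩ := exists_evar_small_right hp1
        (hf.mono (Icc_subset_Icc hp.1 le_rfl))
        (by
          intro h
          apply hbv
          have := eVariationOn.mono f (Icc_subset_Icc hp.1 (le_refl (1:ℝ)))
          rw [h] at this
          exact top_le_iff.mp this)
        hεR
      refine ⟨t, h1, fun u hu hpu hut => ?_⟩
      have hsub : Icc 0 1 ∩ Icc p u ⊆ Icc p t := fun w hw => ⟨hw.2.1, hw.2.2.trans hut⟩
      have h5 := (eVariationOn.mono f hsub).trans h3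
      have h4 := ENNReal.toReal_mono ENNReal.ofReal_ne_top h5
      rw [ENNReal.toReal_ofReal (by linarith)] at h4
      linarith
    · refine ⟨p + 1, lt_add_one p, fun u hu hpu hut => ?_⟩
      have hup : u = p := le_antisymm (hu.2.trans hp1) hpu
      have hss : (Icc (0:ℝ) 1 ∩ Icc p u).Subsingleton := by
        intro w hw w' hw'
        have e1 : w = p := le_antisymm (hw.2.2.trans hup.le) hw.2.1
        have e2 : w' = p := le_antisymm (hw'.2.2.trans hup.le) hw'.2.1
        rw [e1, e2]
      rw [eVariationOn.subsingleton f hss]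
      simpa using hε
  obtain ⟨tm, hpt', hmi⟩ : ∃ tm, tm < p ∧ ∀ u ∈ Icc (0:ℝ) 1, u ≤ p → tm ≤ u →
      (eVariationOn f (Icc 0 1 ∩ Icc u p)).toReal < ε := by
    rcases lt_or_ge 0 p with hp0 | hp0
    · obtain ⟨t, h1, h2, h3⟩ := exists_evar_small_left hp0
        (hf.mono (Icc_subset_Icc le_rfl hp.2))
        (by
          intro h
          apply hbv
          have := eVariationOn.mono f (Icc_subset_Icc (le_refl (0:ℝ)) hp.2)
          rw [h] at this
          exact top_le_iff.mp this)
        hεR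
      refine ⟨t, h2, fun u hu hup htu => ?_⟩
      have hsub : Icc 0 1 ∩ Icc u p ⊆ Icc t p := fun w hw => ⟨htu.trans hw.2.1, hw.2.2⟩
      have h5 := (eVariationOn.mono f hsub).trans h3
      have h4 := ENNReal.toReal_mono ENNReal.ofReal_ne_top h5
      rw [ENNReal.toReal_ofReal (by linarith)] at h4
      linarith
    · refine ⟨p - 1, by linarith, fun u hu hup htu => ?_⟩
      have hup' : u = p := le_antisymm hup (hp0.trans hu.1)
      have hss : (Icc (0:ℝ) 1 ∩ Icc u p).Subsingleton := by
        intro w hw w' hw'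
        have e1 : w = p := le_antisymm hw.2.2 (hup' ▸ hw.2.1)
        have e2 : w' = p := le_antisymm hw'.2.2 (hup' ▸ hw'.2.1)
        rw [e1, e2]
      rw [eVariationOn.subsingleton f hss]
      simpa using hε
  refine ⟨min (tp - p) (p - tm), lt_min (by linarith) (by linarith), ?_⟩
  intro u hu hdist
  rw [Real.dist_eq] at hdist
  have hd1 : u - p < tp - p := lt_of_le_of_lt (le_abs_self _) (hdist.trans_le (min_le_left _ _))
  have hd2 : p - u < p - tm := by
    have := lt_of_le_of_lt (neg_le_abs _) (hdist.trans_le (min_le_right _ _))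
    linarith
  rcases le_total p u with hpu | hup
  · have hval : variationOnFromTo f (Icc 0 1) 0 u - variationOnFromTo f (Icc 0 1) 0 p
        = variationOnFromTo f (Icc 0 1) p u := by
      rw [← variationOnFromTo.add hlbv h0s hp hu]; ring
    rw [Real.dist_eq, hval, variationOnFromTo.eq_of_le f _ hpu,
      abs_of_nonneg ENNReal.toReal_nonneg]
    exact hpl u hu hpu (by linarith)
  · have hval : variationOnFromTo f (Icc 0 1) 0 p - variationOnFromTo f (Icc 0 1) 0 u
        = variationOnFromTo f (Icc 0 1) u p := by
      rw [← variationOnFromTo.add hlbv h0s hu hp]; ring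
    rw [Real.dist_eq, abs_sub_comm, hval, variationOnFromTo.eq_of_le f _ hup,
      abs_of_nonneg ENNReal.toReal_nonneg]
    exact hmi u hu hup (by linarith)

end Continuity
section Reparam

variable {X : Type*} [MetricSpace X]

lemma exists_constant_speed_param {f : ℝ → X} (hf : ContinuousOn f (Icc 0 1))
    (hbv : eVariationOn f (Icc (0:ℝ) 1) ≠ ⊤) :
    ∃ g : ℝ → X,
      HasConstantSpeedOnWith g (Icc 0 1) (eVariationOn f (Icc (0:ℝ) 1)).toNNReal ∧
      g 0 = f 0 ∧ g 1 = f 1 ∧ g '' Icc 0 1 = f '' Icc 0 1 ∧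
      eVariationOn g (Icc (0:ℝ) 1) = eVariationOn f (Icc (0:ℝ) 1) := by
  have h0s : (0:ℝ) ∈ Icc (0:ℝ) 1 := ⟨le_rfl, zero_le_one⟩
  have h1s : (1:ℝ) ∈ Icc (0:ℝ) 1 := ⟨zero_le_one, le_rfl⟩
  have hlbv : LocallyBoundedVariationOn f (Icc (0:ℝ) 1) :=
    BoundedVariationOn.locallyBoundedVariationOn hbv
  by_cases hV0 : eVariationOn f (Icc (0:ℝ) 1) = 0
  · refine ⟨f, ?_, rfl, rfl, rfl, rfl⟩
    intro u hu w hw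
    have h1 : eVariationOn f (Icc (0:ℝ) 1 ∩ Icc u w) = 0 :=
      le_antisymm (le_trans (eVariationOn.mono f inter_subset_left) hV0.le) zero_le
    rw [h1, hV0]
    simp
  -- main case
  set M := (eVariationOn f (Icc (0:ℝ) 1)).toReal with hM
  have hMpos : 0 < M := ENNReal.toReal_pos hV0 hbv
  set v := variationOnFromTo f (Icc 0 1) 0 with hv
  have hv0 : v 0 = 0 := variationOnFromTo.self f _ 0
  have hv1 : v 1 = M := by
    rw [hv, variationOnFromTo.eq_of_le f _ zero_le_one, Set.inter_self]
  have hvmono : MonotoneOn v (Icc 0 1) := variationOnFromTo.monotoneOn hlbv h0s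
  have hvcont : ContinuousOn v (Icc 0 1) := continuousOn_variationOnFromTo hf hbv
  have himg : v '' Icc 0 1 = Icc 0 M := by
    apply Subset.antisymm
    · rintro _ ⟨t, ht, rfl⟩
      exact ⟨hv0 ▸ hvmono h0s ht ht.1, hv1 ▸ hvmono ht h1s ht.2⟩
    · intro w hw
      have h2 := intermediate_value_Icc zero_le_one hvcont
      rw [hv0, hv1] at h2
      exact h2 hw
  set δ := naturalParameterization f (Icc 0 1) 0 with hδ
  have hunit : HasUnitSpeedOn δ (Icc 0 M) := by
    have := has_unit_speed_naturalParameterization f hlbv h0s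
    rwa [himg] at this
  have hδv : ∀ t ∈ Icc (0:ℝ) 1, δ (v t) = f t := fun t ht =>
    edist_eq_zero.mp (edist_naturalParameterization_eq_zero hlbv h0s ht)
  have hMcoe : (((eVariationOn f (Icc (0:ℝ) 1)).toNNReal : ℝ≥0) : ℝ) = M := rfl
  have hmono : ∀ p q : ℝ, MonotoneOn (fun t => M * t) (Icc p q) :=
    fun p q u _ w _ huw => mul_le_mul_of_nonneg_left huw hMpos.le
  have hcs : HasConstantSpeedOnWith (fun t => δ (M * t)) (Icc 0 1)
      (eVariationOn f (Icc (0:ℝ) 1)).toNNReal := by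
    rw [hasConstantSpeedOnWith_iff_ordered]
    intro u hu w hw huw
    have h1 : Icc (0:ℝ) 1 ∩ Icc u w = Icc u w := inter_eq_right.mpr (Icc_subset_Icc hu.1 hw.2)
    have h2 : eVariationOn (δ ∘ fun t => M * t) (Icc u w)
        = eVariationOn δ ((fun t => M * t) '' Icc u w) :=
      eVariationOn.comp_eq_of_monotoneOn δ _ (hmono u w)
    rw [h1]
    show eVariationOn (δ ∘ fun t => M * t) (Icc u w) = _
    rw [h2, image_mul_left_Icc' hMpos u w]
    have hu' : M * u ∈ Icc 0 M := ⟨mul_nonneg hMpos.le hu.1, mul_le_of_le_one_right hMpos.le hu.2⟩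
    have hw' : M * w ∈ Icc 0 M := ⟨mul_nonneg hMpos.le hw.1, mul_le_of_le_one_right hMpos.le hw.2⟩
    have h3 := hunit hu' hw'
    rw [inter_eq_right.mpr (Icc_subset_Icc hu'.1 hw'.2)] at h3
    rw [h3, hMcoe]
    congr 1
    push_cast
    ring
  have hg0 : δ (M * 0) = f 0 := by
    have h5 := hδv 0 h0s
    rw [hv0] at h5
    rw [mul_zero]
    exact h5
  have hg1 : δ (M * 1) = f 1 := by
    have h5 := hδv 1 h1s
    rw [hv1] at h5
    rw [mul_one]
    exact h5
  refine ⟨fun t => δ (M * t), hcs, hg0, hg1, ?_, ?_⟩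
  · calc (fun t => δ (M * t)) '' Icc 0 1 = δ '' ((fun t => M * t) '' Icc 0 1) := by
          rw [← image_comp]; rfl
      _ = δ '' Icc 0 M := by rw [image_mul_left_Icc' hMpos, mul_zero, mul_one]
      _ = δ '' (v '' Icc 0 1) := by rw [himg]
      _ = f '' Icc 0 1 := by rw [← image_comp]; exact image_congr hδv
  · have h4 := hcs h0s h1s
    rw [Set.inter_self] at h4
    rw [h4, hMcoe]
    simp only [sub_zero, mul_one]
    exact ENNReal.ofReal_toReal hbv

end Reparam
/-- If distinct points `x, y` are connected by a rectifiable curve `γ` with image `Γ`,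
then there is a rectifiable arc (injective curve) inside `Γ` with endpoints `x` and `y`,
of length at most `ℓ(γ)`. -/
theorem exists_arc_in_curve_image {X : Type*} [MetricSpace X] (x y : X) (hxy : x ≠ y)
    (γ : ℝ → X) (h : IsCurveOn γ x y) (hrect : eVariationOn γ (Set.Icc 0 1) ≠ ⊤) :
    ∃ α : ℝ → X, IsCurveOn α x y ∧ Set.InjOn α (Set.Icc 0 1) ∧
      α '' Set.Icc 0 1 ⊆ γ '' Set.Icc 0 1 ∧
      eVariationOn α (Set.Icc 0 1) ≤ eVariationOn γ (Set.Icc 0 1) := by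
  obtain ⟨hγc, hγ0, hγ1⟩ := h
  have h0s : (0:ℝ) ∈ Icc (0:ℝ) 1 := ⟨le_rfl, zero_le_one⟩
  have h1s : (1:ℝ) ∈ Icc (0:ℝ) 1 := ⟨zero_le_one, le_rfl⟩
  set Γ := γ '' Icc 0 1 with hΓdef
  have hΓc : IsCompact Γ := isCompact_Icc.image_of_continuousOn hγc
  set L := (eVariationOn γ (Icc (0:ℝ) 1)).toNNReal with hLdef
  obtain ⟨g₀, hg₀cs, hg₀0, hg₀1, hg₀im, hg₀var⟩ := exists_constant_speed_param hγc hrect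
  have hg₀lip : LipschitzOnWith L g₀ (Icc 0 1) := hg₀cs.lipschitzOnWith'
  set K : Set (ℝ → X) := {g | (∀ t ∈ Icc (0:ℝ) 1, g t ∈ Γ) ∧ (∀ t ∉ Icc (0:ℝ) 1, g t = x) ∧
      LipschitzOnWith L g (Icc 0 1) ∧ g 0 = x ∧ g 1 = y} with hKdef
  -- K is closed
  have hKclosed : IsClosed K := by
    have h1 : IsClosed {g : ℝ → X | ∀ t ∈ Icc (0:ℝ) 1, g t ∈ Γ} := by
      have he : {g : ℝ → X | ∀ t ∈ Icc (0:ℝ) 1, g t ∈ Γ}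
          = ⋂ t ∈ Icc (0:ℝ) 1, (fun g : ℝ → X => g t) ⁻¹' Γ := by
        ext g; simp
      rw [he]
      exact isClosed_biInter fun t _ => hΓc.isClosed.preimage (continuous_apply t)
    have h2 : IsClosed {g : ℝ → X | ∀ t ∉ Icc (0:ℝ) 1, g t = x} := by
      have he : {g : ℝ → X | ∀ t ∉ Icc (0:ℝ) 1, g t = x}
          = ⋂ t ∈ (Icc (0:ℝ) 1)ᶜ, {g : ℝ → X | g t = x} := by
        ext g; simp
      rw [he]
      exact isClosed_biInter fun t _ => isClosed_eq (continuous_apply t) continuous_const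
    have h3 : IsClosed {g : ℝ → X | LipschitzOnWith L g (Icc 0 1)} := by
      have he : {g : ℝ → X | LipschitzOnWith L g (Icc 0 1)}
          = ⋂ u ∈ Icc (0:ℝ) 1, ⋂ w ∈ Icc (0:ℝ) 1,
              {g : ℝ → X | edist (g u) (g w) ≤ (L : ℝ≥0∞) * edist u w} := by
        ext g
        simp only [mem_setOf_eq, mem_iInter]
        exact ⟨fun hg u hu w hw => hg hu hw, fun hg u hu w hw => hg u hu w hw⟩
      rw [he]
      exact isClosed_biInter fun u _ => isClosed_biInter fun w _ =>
        isClosed_le ((continuous_apply u).edist (continuous_apply w)) continuous_const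
    have h4 : IsClosed {g : ℝ → X | g 0 = x} := isClosed_eq (continuous_apply 0) continuous_const
    have h5 : IsClosed {g : ℝ → X | g 1 = y} := isClosed_eq (continuous_apply 1) continuous_const
    have he : K = {g : ℝ → X | ∀ t ∈ Icc (0:ℝ) 1, g t ∈ Γ} ∩ ({g | ∀ t ∉ Icc (0:ℝ) 1, g t = x}
        ∩ ({g | LipschitzOnWith L g (Icc 0 1)} ∩ ({g | g 0 = x} ∩ {g | g 1 = y}))) := rfl
    rw [he]
    exact h1.inter (h2.inter (h3.inter (h4.inter h5)))
  -- K is compact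
  have hKcompact : IsCompact K := by
    have hC : ∀ t : ℝ, IsCompact (if t ∈ Icc (0:ℝ) 1 then Γ else ({x} : Set X)) := by
      intro t; split_ifs; exacts [hΓc, isCompact_singleton]
    apply IsCompact.of_isClosed_subset (isCompact_univ_pi hC) hKclosed
    intro g hg
    rw [mem_univ_pi]
    intro t
    by_cases ht : t ∈ Icc (0:ℝ) 1
    · rw [if_pos ht]; exact hg.1 t ht
    · rw [if_neg ht]; exact mem_singleton_iff.mpr (hg.2.1 t ht)
  -- K is nonempty
  set gext : ℝ → X := fun t => if t ∈ Icc (0:ℝ) 1 then g₀ t else x with hgext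
  have hgextK : gext ∈ K := by
    refine ⟨?_, ?_, ?_, ?_, ?_⟩
    · intro t ht
      simp only [hgext, if_pos ht]
      have hmem : g₀ t ∈ g₀ '' Icc 0 1 := mem_image_of_mem g₀ ht
      rw [hg₀im] at hmem
      exact hmem
    · intro t ht; simp only [hgext, if_neg ht]
    · intro u hu w hw
      simp only [hgext, if_pos hu, if_pos hw]
      exact hg₀lip hu hw
    · simp only [hgext, if_pos h0s]; rw [hg₀0, hγ0]
    · simp only [hgext, if_pos h1s]; rw [hg₀1, hγ1]
  -- minimizer
  obtain ⟨g₁, hg₁K, hg₁min⟩ := exists_min_of_lsc hKcompact hKclosed ⟨gext, hgextK⟩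
    (eVariationOn_lowerSemicontinuous_pi (Icc 0 1))
  obtain ⟨hg₁Γ, hg₁out, hg₁lip, hg₁0, hg₁1⟩ := hg₁K
  have hvle : eVariationOn g₁ (Icc (0:ℝ) 1) ≤ eVariationOn γ (Icc (0:ℝ) 1) := by
    have h6 := hg₁min gext hgextK
    have h7 : eVariationOn gext (Icc (0:ℝ) 1) = eVariationOn γ (Icc (0:ℝ) 1) := by
      rw [← hg₀var]
      exact eVariationOn.eq_of_eqOn (fun t ht => by simp only [hgext, if_pos ht])
    rw [h7] at h6
    exact h6
  have hmtop : eVariationOn g₁ (Icc (0:ℝ) 1) ≠ ⊤ := fun hm => hrect (top_le_iff.mp (hm ▸ hvle))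
  have hm0 : eVariationOn g₁ (Icc (0:ℝ) 1) ≠ 0 := by
    intro h0
    apply hxy
    have h8 := (eVariationOn.eq_zero_iff g₁).mp h0 0 h0s 1 h1s
    rw [hg₁0, hg₁1] at h8
    exact edist_eq_zero.mp h8
  -- constant-speed reparameterization of the minimizer
  obtain ⟨α, hαcs, hα0, hα1, hαim, hαvar⟩ :=
    exists_constant_speed_param hg₁lip.continuousOn hmtop
  set M := (eVariationOn g₁ (Icc (0:ℝ) 1)).toReal with hMdef
  have hMpos : 0 < M := ENNReal.toReal_pos hm0 hmtop
  have hMcoe : (((eVariationOn g₁ (Icc (0:ℝ) 1)).toNNReal : ℝ≥0) : ℝ) = M := rfl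
  have hαlip : LipschitzOnWith (eVariationOn g₁ (Icc (0:ℝ) 1)).toNNReal α (Icc 0 1) :=
    hαcs.lipschitzOnWith'
  have hα0x : α 0 = x := by rw [hα0, hg₁0]
  have hα1y : α 1 = y := by rw [hα1, hg₁1]
  have hαΓ : α '' Icc 0 1 ⊆ Γ := by rw [hαim]; exact image_subset_iff.mpr hg₁Γ
  have hMle : (eVariationOn g₁ (Icc (0:ℝ) 1)).toNNReal ≤ L := ENNReal.toNNReal_mono hrect hvle
  have hαd : ∀ p q : ℝ, p ∈ Icc (0:ℝ) 1 → q ∈ Icc (0:ℝ) 1 → p ≤ q →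
      edist (α p) (α q) ≤ ((eVariationOn g₁ (Icc (0:ℝ) 1)).toNNReal : ℝ≥0∞)
        * ENNReal.ofReal (q - p) := by
    intro p q hp hq hpq
    have h9 := hαlip hp hq
    rw [edist_real, abs_sub_comm, abs_of_nonneg (sub_nonneg.mpr hpq)] at h9
    exact h9
  -- injectivity via loop-cutting
  have key : ∀ a ∈ Icc (0:ℝ) 1, ∀ b ∈ Icc (0:ℝ) 1, a < b → α a = α b → False := by
    intro a ha b hb hlt heq
    obtain ⟨ha1, ha2⟩ := ha
    obtain ⟨hb1, hb2⟩ := hb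
    by_cases hba : b - a = 1
    · have ha0 : a = 0 := by linarith
      have hb1' : b = 1 := by linarith
      apply hxy
      rw [← hα0x, ← hα1y, ← ha0, ← hb1']
      exact heq
    set lam := 1 - (b - a) with hlam
    have hlampos : 0 < lam := by
      have hle1 : b - a ≤ 1 := by linarith
      have : b - a < 1 := lt_of_le_of_ne hle1 hba
      rw [hlam]; linarith
    have hlamlt : lam < 1 := by rw [hlam]; linarith
    set c := a / lam with hc
    have hc0 : 0 ≤ c := div_nonneg ha1 hlampos.le
    have hlc : lam * c = a := by rw [hc, mul_comm]; exact div_mul_cancel₀ a hlampos.ne'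
    have hc1 : c ≤ 1 := by
      rw [hc, div_le_one hlampos, hlam]; linarith
    set h2f : ℝ → X := fun u => if u ≤ c then α (lam * u) else α (lam * u + (b - a)) with hhdef
    have hmem1 : ∀ u ∈ Icc (0:ℝ) c, lam * u ∈ Icc (0:ℝ) 1 := by
      intro u hu
      constructor
      · exact mul_nonneg hlampos.le hu.1
      · have h9 : lam * u ≤ lam * c := mul_le_mul_of_nonneg_left hu.2 hlampos.le
        rw [hlc] at h9
        exact h9.trans ha2
    have hmem2 : ∀ u ∈ Icc c (1:ℝ), lam * u + (b - a) ∈ Icc (0:ℝ) 1 := by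
      intro u hu
      constructor
      · have := mul_nonneg hlampos.le (hc0.trans hu.1); linarith
      · have h9 : lam * u ≤ lam * 1 := mul_le_mul_of_nonneg_left hu.2 hlampos.le
        rw [mul_one] at h9
        linarith [h9, hlam.le, hlam.ge]
    have hEq1 : EqOn h2f (fun u => α (lam * u)) (Icc 0 c) := by
      intro u hu
      simp only [hhdef]
      rw [if_pos hu.2]
    have hEq2 : EqOn h2f (fun u => α (lam * u + (b - a))) (Icc c 1) := by
      intro u hu
      simp only [hhdef]
      by_cases huc : u ≤ c
      · have huc' : u = c := le_antisymm huc hu.1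
        rw [if_pos huc, huc', hlc, heq]
        congr 1
        ring
      · rw [if_neg huc]
    have hmono1 : MonotoneOn (fun u => lam * u) (Icc 0 c) :=
      fun u _ w _ huw => mul_le_mul_of_nonneg_left huw hlampos.le
    have hmono2 : MonotoneOn (fun u => lam * u + (b - a)) (Icc c 1) :=
      fun u _ w _ huw => add_le_add_left (mul_le_mul_of_nonneg_left huw hlampos.le) _
    have hup1 : eVariationOn h2f (Icc 0 c) = ENNReal.ofReal (M * a) := by
      have h9 := eVariationOn.comp_eq_of_monotoneOn α (fun u => lam * u) hmono1
      rw [image_mul_left_Icc' hlampos, mul_zero, hlc] at h9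
      calc eVariationOn h2f (Icc 0 c)
          = eVariationOn (α ∘ fun u => lam * u) (Icc 0 c) := eVariationOn.eq_of_eqOn hEq1
        _ = eVariationOn α (Icc 0 a) := h9
        _ = ENNReal.ofReal (M * a) := by
            have h10 := hαcs h0s (Set.mem_Icc.mpr ⟨ha1, ha2⟩)
            rw [inter_eq_right.mpr (Icc_subset_Icc le_rfl ha2)] at h10
            rw [h10, hMcoe]
            congr 1
            ring
    have hup2 : eVariationOn h2f (Icc c 1) = ENNReal.ofReal (M * (1 - b)) := by
      have h9 := eVariationOn.comp_eq_of_monotoneOn α (fun u => lam * u + (b - a)) hmono2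
      rw [image_affine_Icc' hlampos (b - a) c 1] at h9
      have e1 : lam * c + (b - a) = b := by rw [hlc]; ring
      have e2 : lam * 1 + (b - a) = 1 := by rw [mul_one, hlam]; ring
      rw [e1, e2] at h9
      calc eVariationOn h2f (Icc c 1)
          = eVariationOn (α ∘ fun u => lam * u + (b - a)) (Icc c 1) :=
            eVariationOn.eq_of_eqOn hEq2
        _ = eVariationOn α (Icc b 1) := h9
        _ = ENNReal.ofReal (M * (1 - b)) := by
            have h10 := hαcs (Set.mem_Icc.mpr ⟨hb1, hb2⟩) h1s
            rw [inter_eq_right.mpr (Icc_subset_Icc hb1 le_rfl)] at h10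
            rw [h10, hMcoe]
    have hsplit : eVariationOn h2f (Icc 0 c) + eVariationOn h2f (Icc c 1)
        = eVariationOn h2f (Icc 0 1) := by
      have h9 := eVariationOn.Icc_add_Icc h2f (s := univ) hc0 hc1 (mem_univ c)
      simpa [univ_inter] using h9
    have hvarh : eVariationOn h2f (Icc 0 1) = ENNReal.ofReal (M * lam) := by
      rw [← hsplit, hup1, hup2,
        ← ENNReal.ofReal_add (mul_nonneg hMpos.le ha1) (mul_nonneg hMpos.le (by linarith))]
      congr 1
      rw [hlam]
      ring
    have hlt2 : eVariationOn h2f (Icc 0 1) < eVariationOn g₁ (Icc (0:ℝ) 1) := by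
      rw [hvarh, ← ENNReal.ofReal_toReal hmtop, ← hMdef, ENNReal.ofReal_lt_ofReal_iff hMpos]
      nlinarith
    -- h2f is Lipschitz
    have hliph : LipschitzOnWith (eVariationOn g₁ (Icc (0:ℝ) 1)).toNNReal h2f (Icc 0 1) := by
      apply lipschitzOnWith_of_ordered
      intro u hu w hw huw
      have hedist : ENNReal.ofReal (w - u) ≤ edist u w := by
        rw [edist_real, abs_sub_comm, abs_of_nonneg (sub_nonneg.mpr huw)]
      by_cases hwc : w ≤ c
      · have e1 : h2f u = α (lam * u) := by simp only [hhdef]; rw [if_pos (huw.trans hwc)]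
        have e2 : h2f w = α (lam * w) := by simp only [hhdef]; rw [if_pos hwc]
        rw [e1, e2]
        have b1 := hαd (lam * u) (lam * w) (hmem1 u ⟨hu.1, huw.trans hwc⟩)
          (hmem1 w ⟨hu.1.trans huw, hwc⟩) (mul_le_mul_of_nonneg_left huw hlampos.le)
        refine b1.trans ?_
        apply mul_le_mul_right
        refine le_trans (ENNReal.ofReal_le_ofReal ?_) hedist
        nlinarith
      · by_cases huc : u ≤ c
        · have e1 : h2f u = α (lam * u) := by simp only [hhdef]; rw [if_pos huc]
          have e2 : h2f w = α (lam * w + (b - a)) := by simp only [hhdef]; rw [if_neg hwc]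
          have hcw : c ≤ w := le_of_not_ge hwc
          have hmemu : lam * u ∈ Icc (0:ℝ) 1 := hmem1 u ⟨hu.1, huc⟩
          have hmema : lam * c ∈ Icc (0:ℝ) 1 := hmem1 c ⟨hc0, le_rfl⟩
          have hmemb : lam * c + (b - a) ∈ Icc (0:ℝ) 1 := hmem2 c ⟨le_rfl, hc1⟩
          have hmemw : lam * w + (b - a) ∈ Icc (0:ℝ) 1 := hmem2 w ⟨hcw, hw.2⟩
          have b1 := hαd (lam * u) (lam * c) hmemu hmema
            (mul_le_mul_of_nonneg_left huc hlampos.le)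
          have b2 := hαd (lam * c + (b - a)) (lam * w + (b - a)) hmemb hmemw
            (by nlinarith [mul_le_mul_of_nonneg_left hcw hlampos.le])
          have hmid : α (lam * c) = α (lam * c + (b - a)) := by
            rw [hlc, heq]
            congr 1
            ring
          have etri : edist (h2f u) (h2f w) ≤ edist (α (lam * u)) (α (lam * c))
              + edist (α (lam * c + (b - a))) (α (lam * w + (b - a))) := by
            rw [e1, e2]
            calc edist (α (lam * u)) (α (lam * w + (b - a)))
                ≤ edist (α (lam * u)) (α (lam * c))
                  + edist (α (lam * c)) (α (lam * w + (b - a))) := edist_triangle _ _ _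
              _ = _ := by rw [hmid]
          refine etri.trans ?_
          refine (add_le_add b1 b2).trans ?_
          rw [← mul_add, ← ENNReal.ofReal_add (by nlinarith [mul_le_mul_of_nonneg_left huc hlampos.le])
            (by nlinarith [mul_le_mul_of_nonneg_left hcw hlampos.le])]
          apply mul_le_mul_right
          refine le_trans (ENNReal.ofReal_le_ofReal ?_) hedist
          nlinarith
        · have e1 : h2f u = α (lam * u + (b - a)) := by simp only [hhdef]; rw [if_neg huc]
          have e2 : h2f w = α (lam * w + (b - a)) := by simp only [hhdef]; rw [if_neg hwc]
          rw [e1, e2]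
          have hcu : c ≤ u := le_of_not_ge huc
          have b1 := hαd (lam * u + (b - a)) (lam * w + (b - a)) (hmem2 u ⟨hcu, hu.2⟩)
            (hmem2 w ⟨hcu.trans huw, hw.2⟩)
            (by nlinarith [mul_le_mul_of_nonneg_left huw hlampos.le])
          refine b1.trans ?_
          apply mul_le_mul_right
          refine le_trans (ENNReal.ofReal_le_ofReal ?_) hedist
          nlinarith
    -- the competitor curve
    set g₂ : ℝ → X := fun u => if u ∈ Icc (0:ℝ) 1 then h2f u else x with hg₂def
    have hg₂K : g₂ ∈ K := by
      refine ⟨?_, ?_, ?_, ?_, ?_⟩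
      · intro t ht
        simp only [hg₂def, if_pos ht]
        by_cases htc : t ≤ c
        · have e1 : h2f t = α (lam * t) := by simp only [hhdef]; rw [if_pos htc]
          rw [e1]
          exact hαΓ (mem_image_of_mem α (hmem1 t ⟨ht.1, htc⟩))
        · have e1 : h2f t = α (lam * t + (b - a)) := by simp only [hhdef]; rw [if_neg htc]
          rw [e1]
          exact hαΓ (mem_image_of_mem α (hmem2 t ⟨le_of_not_ge htc, ht.2⟩))
      · intro t ht; simp only [hg₂def, if_neg ht]
      · intro u hu w hw
        simp only [hg₂def, if_pos hu, if_pos hw]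
        exact (hliph hu hw).trans (mul_le_mul_left (ENNReal.coe_le_coe.2 hMle) _)
      · simp only [hg₂def, if_pos h0s, hhdef]
        rw [if_pos hc0, mul_zero, hα0x]
      · simp only [hg₂def, if_pos h1s, hhdef]
        by_cases h1c : (1:ℝ) ≤ c
        · have hce : c = 1 := le_antisymm hc1 h1c
          have hla : lam = a := by rw [hce, mul_one] at hlc; exact hlc
          have hbe : b = 1 := by
            have := hlam
            linarith [hla.le, hla.ge, hlam.le, hlam.ge]
          rw [if_pos h1c, mul_one, hla, heq, hbe, hα1y]
        · have e2 : lam * 1 + (b - a) = 1 := by rw [mul_one, hlam]; ring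
          rw [if_neg h1c, e2, hα1y]
    have hcontr := hg₁min g₂ hg₂K
    have hvg₂ : eVariationOn g₂ (Icc (0:ℝ) 1) = eVariationOn h2f (Icc 0 1) :=
      eVariationOn.eq_of_eqOn (fun t ht => by simp only [hg₂def, if_pos ht])
    rw [hvg₂] at hcontr
    exact absurd hcontr (not_le.mpr hlt2)
  have hinj : InjOn α (Icc 0 1) := by
    intro a ha b hb hab
    by_contra hne
    rcases lt_or_gt_of_ne hne with hl | hl
    · exact key a ha b hb hl hab
    · exact key b hb a ha hl hab.symm
  exact ⟨α, ⟨hαlip.continuousOn, hα0x, hα1y⟩, hinj, hαΓ, hαvar.trans_le hvle⟩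
end

section
/- If Γ₁ and Γ₂ are two distinct rectifiable arcs in a metric space X with the same pair of endpoints, then there exists an injective Lipschitz map α:S¹→X. -/
open Set Metric
open scoped ENNReal NNReal

/-- `A` is a rectifiable arc with endpoints `x` and `y`: the homeomorphic image of `[0,1]`
(parameterized by an injective continuous curve) of finite length. -/
def IsRectArc {X : Type*} [PseudoEMetricSpace X] (A : Set X) (x y : X) : Prop :=
  ∃ γ : ℝ → X, IsCurveOn γ x y ∧ Set.InjOn γ (Set.Icc 0 1) ∧
    γ '' Set.Icc 0 1 = A ∧ eVariationOn γ (Set.Icc 0 1) ≠ ⊤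

/-- The unit circle `S¹ ⊂ ℝ²` with its induced metric. -/
abbrev Circle' : Type := ↥(Metric.sphere (0 : EuclideanSpace ℝ (Fin 2)) 1)

section VarCont

variable {X : Type*} [MetricSpace X]

/-- Near the left endpoint, a continuous BV function has small variation. -/
lemma exists_small_var_right {c : ℝ → X} {A B : ℝ} (hAB : A < B)
    (hcont : ContinuousWithinAt c (Icc A B) A)
    (hfin : eVariationOn c (Icc A B) ≠ ⊤) {ε : ℝ≥0∞} (hε : 0 < ε) (hεt : ε ≠ ⊤) :
    ∃ t ∈ Ioc A B, eVariationOn c (Icc A t) ≤ ε := by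
  classical
  have hε3 : (0:ℝ≥0∞) < ε / 3 := ENNReal.div_pos hε.ne' (by norm_num)
  have hε3t : ε / 3 ≠ ⊤ := by
    simp [ENNReal.div_eq_top, hεt]
  -- continuity: find δ
  have hev : ∀ᶠ t in nhdsWithin A (Icc A B), edist (c t) (c A) < ε / 3 := by
    have h1 : c ⁻¹' Metric.eball (c A) (ε / 3) ∈ nhdsWithin A (Icc A B) :=
      hcont.tendsto (EMetric.ball_mem_nhds _ hε3)
    filter_upwards [h1] with t ht
    simpa [Metric.mem_eball, edist_comm] using ht
  obtain ⟨δ, hδ, hball⟩ := Metric.mem_nhdsWithin_iff.mp hev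
  set T := min B (A + δ / 2) with hT
  have hTmem : T ∈ Ioc A B := ⟨lt_min hAB (by linarith), min_le_left _ _⟩
  have hsub : ∀ t ∈ Icc A T, edist (c t) (c A) < ε / 3 := by
    intro t ht
    apply hball
    have h2 : t ≤ A + δ / 2 := le_trans ht.2 (min_le_right _ _)
    constructor
    · rw [Metric.mem_ball, Real.dist_eq, abs_lt]
      constructor <;> linarith [ht.1]
    · exact ⟨ht.1, le_trans ht.2 (min_le_left _ _)⟩
  set V' := eVariationOn c (Icc A T) with hV'
  have hV'fin : V' ≠ ⊤ :=
    ne_top_of_le_ne_top hfin (eVariationOn.mono c (Icc_subset_Icc le_rfl hTmem.2))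
  by_cases hV'small : V' ≤ ε
  · exact ⟨T, hTmem, hV'small⟩
  push_neg at hV'small
  have hV'pos : V' ≠ 0 := fun h => by
    rw [h] at hV'small; exact (not_lt_of_ge zero_le) hV'small
  have hlt : V' - ε / 3 < V' := ENNReal.sub_lt_self hV'fin hV'pos hε3.ne'
  nth_rewrite 2 [hV'] at hlt
  rw [eVariationOn, lt_iSup_iff] at hlt
  obtain ⟨⟨n, u, hu, us⟩, hsum⟩ := hlt
  by_cases hall : ∀ i ≤ n, u i = A
  · exfalso
    have : (∑ i ∈ Finset.range n, edist (c (u (i + 1))) (c (u i))) = 0 := by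
      apply Finset.sum_eq_zero
      intro i hi
      rw [Finset.mem_range] at hi
      rw [hall (i+1) (by omega), hall i (by omega), edist_self]
    rw [this] at hsum
    exact (not_lt_of_ge zero_le) hsum
  push_neg at hall
  obtain ⟨i₀, hi₀n, hi₀⟩ := hall
  have hi₀' : A < u i₀ := lt_of_le_of_ne (us i₀).1 (Ne.symm hi₀)
  have hex : ∃ i, A < u i := ⟨i₀, hi₀'⟩
  set m := Nat.find hex with hm
  have hmlt : A < u m := Nat.find_spec hex
  have hmle : m ≤ n := le_trans (Nat.find_le hi₀') hi₀n
  have hbelow : ∀ k < m, u k = A := by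
    intro k hk
    exact le_antisymm (not_lt.mp (Nat.find_min hex hk)) (us k).1
  -- split the sum
  have hsplit : (∑ i ∈ Finset.range n, edist (c (u (i + 1))) (c (u i)))
      ≤ ε / 3 + eVariationOn c (Icc (u m) T) := by
    rw [Finset.range_eq_Ico, ← Finset.sum_Ico_consecutive _ (Nat.zero_le m) hmle]
    gcongr
    · -- head sum ≤ ε/3
      rcases Nat.eq_zero_or_pos m with hm0 | hmpos
      · simp [hm0]
      · obtain ⟨k, hk⟩ := Nat.exists_eq_succ_of_ne_zero hmpos.ne'
        rw [hk, Finset.sum_Ico_succ_top (Nat.zero_le _)]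
        have hzero : (∑ i ∈ Finset.Ico 0 k, edist (c (u (i + 1))) (c (u i))) = 0 := by
          apply Finset.sum_eq_zero
          intro i hi
          rw [Finset.mem_Ico] at hi
          rw [hbelow (i+1) (by omega), hbelow i (by omega), edist_self]
        rw [hzero, zero_add, hbelow k (by omega)]
        exact (hsub _ (us _)).le
    · -- tail sum ≤ variation on [u m, T]
      rw [Finset.sum_Ico_eq_sum_range]
      have : ∀ i, u (m + i) ∈ Icc (u m) T := fun i => ⟨hu (Nat.le_add_right m i), (us _).2⟩
      exact eVariationOn.sum_le (f := c) (n := n - m) (fun i j hij => hu (by omega)) this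
  -- conclude
  refine ⟨u m, ⟨hmlt, le_trans (us m).2 hTmem.2⟩, ?_⟩
  by_contra hW
  push_neg at hW
  have hWR : eVariationOn c (Icc A (u m)) + eVariationOn c (Icc (u m) T) = V' := by
    have := eVariationOn.Icc_add_Icc c (s := univ) (us m).1 (us m).2 (mem_univ (u m))
    simpa using this
  have hRfin : eVariationOn c (Icc (u m) T) ≠ ⊤ := by
    intro h
    rw [h] at hWR
    simp at hWR
    exact hV'fin hWR.symm
  have h1 : V' < ε / 3 + eVariationOn c (Icc (u m) T) + ε / 3 := by
    have := lt_of_lt_of_le hsum hsplit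
    have hd3 : ε / 3 ≤ V' := le_trans (ENNReal.div_le_of_le_mul (le_mul_of_one_le_right zero_le (by norm_num))) hV'small.le
    rwa [ENNReal.sub_lt_iff_lt_right hε3t hd3] at this
  rw [← hWR] at h1
  have h2 : ε + eVariationOn c (Icc (u m) T) < ε / 3 + ε / 3 + eVariationOn c (Icc (u m) T) := by
    calc ε + eVariationOn c (Icc (u m) T)
        ≤ eVariationOn c (Icc A (u m)) + eVariationOn c (Icc (u m) T) := add_le_add_left hW.le _
      _ < ε / 3 + eVariationOn c (Icc (u m) T) + ε / 3 := h1
      _ = ε / 3 + ε / 3 + eVariationOn c (Icc (u m) T) := by ring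
  have h3 : ε < ε / 3 + ε / 3 := by
    exact (ENNReal.add_lt_add_iff_right hRfin).mp h2
  have : ε / 3 + ε / 3 ≤ ε := by
    rw [← ENNReal.add_div]
    exact ENNReal.div_le_of_le_mul (by
      rw [mul_comm]
      calc ε + ε ≤ ε + (ε + ε) := by gcongr; exact le_add_self
        _ = 3 * ε := by ring)
  exact (not_lt_of_ge this) h3

end VarCont
lemma exists_small_var_left {X : Type*} [MetricSpace X] {c : ℝ → X} {A B : ℝ} (hAB : A < B)
    (hcont : ContinuousWithinAt c (Icc A B) B)
    (hfin : eVariationOn c (Icc A B) ≠ ⊤) {ε : ℝ≥0∞} (hε : 0 < ε) (hεt : ε ≠ ⊤) :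
    ∃ t ∈ Ico A B, eVariationOn c (Icc t B) ≤ ε := by
  set r : ℝ → ℝ := fun t => A + B - t with hr
  have hrim : ∀ s t : ℝ, r '' Icc s t = Icc (r t) (r s) := by
    intro s t
    simpa [hr] using Set.image_const_sub_Icc (a := A + B) (b := s) (c := t)
  have key : ∀ s t : ℝ, eVariationOn (c ∘ r) (Icc s t) = eVariationOn c (Icc (r t) (r s)) := by
    intro s t
    rw [eVariationOn.comp_eq_of_antitoneOn c r
      (fun x _ y _ xy => by simp only [hr]; linarith), hrim]
  have hrB : r B = A := by simp [hr]
  have hrA : r A = B := by simp [hr]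
  have hfin' : eVariationOn (c ∘ r) (Icc A B) ≠ ⊤ := by
    rw [key, hrB, hrA]; exact hfin
  have hcont' : ContinuousWithinAt (c ∘ r) (Icc A B) A := by
    refine ContinuousWithinAt.comp (show ContinuousWithinAt c (Icc A B) (r A) by rw [hrA]; exact hcont)
      ((continuous_const.sub continuous_id).continuousWithinAt) ?_
    intro t ht
    exact ⟨by simp only [hr]; simp at ht ⊢; linarith [ht.2], by simp only [hr]; simp at ht ⊢; linarith [ht.1]⟩
  obtain ⟨t', ht', hvar⟩ := exists_small_var_right hAB hcont' hfin' hε hεt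
  refine ⟨r t', ⟨by simp only [hr]; linarith [ht'.2], by simp only [hr]; linarith [ht'.1]⟩, ?_⟩
  rw [key A t', hrA] at hvar
  exact hvar
lemma continuousOn_union_closed {α β : Type*} [TopologicalSpace α] [TopologicalSpace β]
    {f : α → β} {s t : Set α} (hsc : IsClosed s) (htc : IsClosed t)
    (hs : ContinuousOn f s) (ht : ContinuousOn f t) : ContinuousOn f (s ∪ t) := by
  intro x hx
  unfold ContinuousWithinAt
  rw [nhdsWithin_union, Filter.tendsto_sup]
  constructor
  · by_cases hxs : x ∈ s
    · exact hs x hxs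
    · have hbot : nhdsWithin x s = ⊥ := by
        rw [← Filter.not_neBot]
        intro h
        exact hxs (hsc.closure_eq ▸ mem_closure_iff_nhdsWithin_neBot.mpr h)
      rw [hbot]
      exact Filter.tendsto_bot
  · by_cases hxt : x ∈ t
    · exact ht x hxt
    · have hbot : nhdsWithin x t = ⊥ := by
        rw [← Filter.not_neBot]
        intro h
        exact hxt (htc.closure_eq ▸ mem_closure_iff_nhdsWithin_neBot.mpr h)
      rw [hbot]
      exact Filter.tendsto_bot

lemma chord_angle_bound {a b : ℝ} (ha : a ∈ Set.Ioc (-Real.pi) Real.pi)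
    (hb : b ∈ Set.Ioc (-Real.pi) Real.pi) :
    min |a - b| (2 * Real.pi - |a - b|)
      ≤ (Real.pi / 2) *
        ‖Complex.exp (a * Complex.I) - Complex.exp (b * Complex.I)‖ := by
  have hpi := Real.pi_pos
  set d := |a - b| with hd
  have hd0 : 0 ≤ d := abs_nonneg _
  have hd2 : d ≤ 2 * Real.pi :=
    abs_le.mpr ⟨by linarith [ha.1, hb.2], by linarith [ha.2, hb.1]⟩
  set m := min d (2 * Real.pi - d) with hm
  have hm0 : 0 ≤ m := le_min hd0 (by linarith)
  have hmpi : m ≤ Real.pi := by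
    rcases le_total d Real.pi with h | h
    · exact le_trans (min_le_left _ _) h
    · exact le_trans (min_le_right _ _) (by linarith)
  set Q := ‖Complex.exp (a * Complex.I) - Complex.exp (b * Complex.I)‖ with hQ
  have hQ0 : 0 ≤ Q := norm_nonneg _
  have hre : (Complex.exp (↑a * Complex.I) - Complex.exp (↑b * Complex.I)).re
      = Real.cos a - Real.cos b := by
    simp [Complex.exp_ofReal_mul_I_re]
  have him : (Complex.exp (↑a * Complex.I) - Complex.exp (↑b * Complex.I)).im
      = Real.sin a - Real.sin b := by
    simp [Complex.exp_ofReal_mul_I_im]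
  have hchord : Q ^ 2 = 2 - 2 * Real.cos (a - b) := by
    rw [hQ, Complex.sq_norm, Complex.normSq_apply, hre, him, Real.cos_sub]
    nlinarith [Real.sin_sq_add_cos_sq a, Real.sin_sq_add_cos_sq b]
  have hcosd : Real.cos (a - b) = Real.cos d := by rw [hd, Real.cos_abs]
  have hcosm : Real.cos d = Real.cos m := by
    rcases min_cases d (2 * Real.pi - d) with ⟨h1, _⟩ | ⟨h1, _⟩
    · rw [hm, h1]
    · rw [hm, h1]
      rw [show 2 * Real.pi - d = -(d - 2*Real.pi) by ring, Real.cos_neg,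
        Real.cos_sub_two_pi]
  have hub : Real.cos m ≤ 1 - 2 / Real.pi ^ 2 * m ^ 2 :=
    Real.cos_le_one_sub_mul_cos_sq (by rwa [abs_of_nonneg hm0])
  have h1 : (2 / Real.pi * m) ^ 2 ≤ Q ^ 2 := by
    rw [hchord, hcosd, hcosm]
    have hpi2 : (0:ℝ) < Real.pi ^ 2 := by positivity
    have : 2 / Real.pi ^ 2 * m ^ 2 ≤ 1 - Real.cos m := by linarith
    calc (2 / Real.pi * m) ^ 2 = 2 * (2 / Real.pi ^ 2 * m ^ 2) := by
          field_simp
      _ ≤ 2 * (1 - Real.cos m) := by linarith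
      _ = 2 - 2 * Real.cos m := by ring
  have h2 : 2 / Real.pi * m ≤ Q := by
    nlinarith [hm0, hQ0, sq_nonneg (Q - 2 / Real.pi * m)]
  have := mul_le_mul_of_nonneg_left h2 (by positivity : (0:ℝ) ≤ Real.pi / 2)
  calc m = (Real.pi / 2) * (2 / Real.pi * m) := by field_simp
    _ ≤ (Real.pi / 2) * Q := this
lemma loop_to_lipschitz_circle {X : Type*} [MetricSpace X] {c : ℝ → X}
    (hc : ContinuousOn c (Icc 0 1)) (hinj : Set.InjOn c (Ico 0 1))
    (hcl : c 0 = c 1) (hfin : eVariationOn c (Icc 0 1) ≠ ⊤) :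
    ∃ (K : ℝ≥0) (α : Circle' → X), Function.Injective α ∧ LipschitzWith K α := by
  classical
  have hpi := Real.pi_pos
  set φ : ℝ → ℝ := fun t => (eVariationOn c (Icc 0 t)).toReal with hφdef
  have hEfin : ∀ {s t : ℝ}, 0 ≤ s → t ≤ 1 → eVariationOn c (Icc s t) ≠ ⊤ := fun h0 h1 =>
    ne_top_of_le_ne_top hfin (eVariationOn.mono c (Icc_subset_Icc h0 h1))
  have hφadd : ∀ {s t : ℝ}, 0 ≤ s → s ≤ t → t ≤ 1 →
      φ t = φ s + (eVariationOn c (Icc s t)).toReal := by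
    intro s t h0 hst h1
    have h := eVariationOn.Icc_add_Icc c (s := univ) h0 hst (mem_univ s)
    simp only [univ_inter] at h
    rw [hφdef]
    dsimp only
    rw [← h, ENNReal.toReal_add (hEfin le_rfl (by linarith)) (hEfin h0 h1)]
  have hφ0 : φ 0 = 0 := by
    rw [hφdef]
    dsimp only
    rw [Icc_self, eVariationOn.subsingleton c subsingleton_singleton, ENNReal.toReal_zero]
  have hvar_ne : ∀ {s t : ℝ}, 0 ≤ s → s < t → t ≤ 1 → eVariationOn c (Icc s t) ≠ 0 := by
    intro s t h0 hst h1 h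
    rw [eVariationOn.eq_zero_iff] at h
    have hm : (s + t) / 2 ∈ Icc s t := ⟨by linarith, by linarith⟩
    have he := h s (left_mem_Icc.mpr hst.le) _ hm
    rw [edist_eq_zero] at he
    have := hinj (⟨h0, by linarith⟩ : s ∈ Ico (0:ℝ) 1)
      (⟨by linarith, by linarith⟩ : (s + t) / 2 ∈ Ico (0:ℝ) 1) he
    linarith
  have hφlt : ∀ {s t : ℝ}, 0 ≤ s → s < t → t ≤ 1 → φ s < φ t := by
    intro s t h0 hst h1
    rw [hφadd h0 hst.le h1]
    have := ENNReal.toReal_pos (hvar_ne h0 hst h1) (hEfin h0 h1)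
    linarith
  have hφmono : ∀ {s t : ℝ}, 0 ≤ s → s ≤ t → t ≤ 1 → φ s ≤ φ t := by
    intro s t h0 hst h1
    rcases eq_or_lt_of_le hst with rfl | h
    · exact le_rfl
    · exact (hφlt h0 h h1).le
  set L := φ 1 with hLdef
  have hLpos : 0 < L := by
    have := hφlt le_rfl one_pos le_rfl
    rwa [hφ0] at this
  -- continuity of φ on [0,1]
  have hφcont : ContinuousOn φ (Icc 0 1) := by
    intro A hA
    rw [Metric.continuousWithinAt_iff]
    intro ε hε
    have hright : ∃ δ > 0, ∀ t ∈ Icc (0:ℝ) 1, A ≤ t → t - A < δ →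
        (eVariationOn c (Icc A t)).toReal < ε := by
      rcases eq_or_lt_of_le hA.2 with h1 | h1
      · refine ⟨1, one_pos, fun t ht hAt _ => ?_⟩
        have : t = A := le_antisymm (h1 ▸ ht.2) hAt
        rw [this, Icc_self, eVariationOn.subsingleton c subsingleton_singleton]
        simpa using hε
      · obtain ⟨t₂, ht₂, hv⟩ := exists_small_var_right h1
          ((hc A hA).mono (Icc_subset_Icc hA.1 le_rfl))
          (ne_top_of_le_ne_top hfin (eVariationOn.mono c (Icc_subset_Icc hA.1 le_rfl)))
          (ε := ENNReal.ofReal (ε / 2)) (ENNReal.ofReal_pos.mpr (by linarith))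
          ENNReal.ofReal_ne_top
        refine ⟨t₂ - A, by linarith [ht₂.1], fun t ht hAt hlt => ?_⟩
        have hle : eVariationOn c (Icc A t) ≤ ENNReal.ofReal (ε / 2) :=
          le_trans (eVariationOn.mono c (Icc_subset_Icc le_rfl (by linarith))) hv
        have := ENNReal.toReal_le_of_le_ofReal (by linarith) hle
        linarith
    have hleft : ∃ δ > 0, ∀ t ∈ Icc (0:ℝ) 1, t ≤ A → A - t < δ →
        (eVariationOn c (Icc t A)).toReal < ε := by
      rcases eq_or_lt_of_le hA.1 with h1 | h1
      · refine ⟨1, one_pos, fun t ht htA _ => ?_⟩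
        have : t = A := le_antisymm htA (h1 ▸ ht.1)
        rw [this, Icc_self, eVariationOn.subsingleton c subsingleton_singleton]
        simpa using hε
      · obtain ⟨t₁, ht₁, hv⟩ := exists_small_var_left h1
          ((hc A hA).mono (Icc_subset_Icc le_rfl hA.2))
          (ne_top_of_le_ne_top hfin (eVariationOn.mono c (Icc_subset_Icc le_rfl hA.2)))
          (ε := ENNReal.ofReal (ε / 2)) (ENNReal.ofReal_pos.mpr (by linarith))
          ENNReal.ofReal_ne_top
        refine ⟨A - t₁, by linarith [ht₁.2], fun t ht htA hlt => ?_⟩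
        have hle : eVariationOn c (Icc t A) ≤ ENNReal.ofReal (ε / 2) :=
          le_trans (eVariationOn.mono c (Icc_subset_Icc (by linarith) le_rfl)) hv
        have := ENNReal.toReal_le_of_le_ofReal (by linarith) hle
        linarith
    obtain ⟨δR, hδR, hR⟩ := hright
    obtain ⟨δL, hδL, hLc⟩ := hleft
    refine ⟨min δL δR, lt_min hδL hδR, fun {t} ht hd => ?_⟩
    rw [Real.dist_eq] at hd
    rcases le_total A t with h | h
    · have heq : φ t = φ A + (eVariationOn c (Icc A t)).toReal := hφadd hA.1 h ht.2
      rw [Real.dist_eq, heq]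
      rw [abs_of_nonneg (by simp [ENNReal.toReal_nonneg])]
      have : t - A < δR := by
        rw [abs_of_nonneg (by linarith)] at hd
        exact lt_of_lt_of_le hd (min_le_right _ _)
      simpa using hR t ht h this
    · have heq : φ A = φ t + (eVariationOn c (Icc t A)).toReal := hφadd ht.1 h hA.2
      rw [Real.dist_eq, heq]
      rw [show φ t - (φ t + (eVariationOn c (Icc t A)).toReal)
          = -((eVariationOn c (Icc t A)).toReal) by ring, abs_neg,
        abs_of_nonneg ENNReal.toReal_nonneg]
      have : A - t < δL := by
        rw [abs_of_nonpos (by linarith)] at hd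
        have := lt_of_lt_of_le hd (min_le_left _ _)
        linarith
      exact hLc t ht h this
  -- surjectivity and inverse
  have hsurj : Icc 0 L ⊆ φ '' Icc 0 1 := by
    have := intermediate_value_Icc (zero_le_one) hφcont
    rwa [hφ0] at this
  have hex : ∀ w : ℝ, ∃ t, w ∈ Icc 0 L → (t ∈ Icc (0:ℝ) 1 ∧ φ t = w) := by
    intro w
    by_cases h : w ∈ Icc 0 L
    · obtain ⟨t, ht, hφt⟩ := hsurj h
      exact ⟨t, fun _ => ⟨ht, hφt⟩⟩
    · exact ⟨0, fun h' => absurd h' h⟩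
  choose ψ hψ using hex
  -- distance estimates
  have hdist1 : ∀ {s t : ℝ}, 0 ≤ s → s ≤ t → t ≤ 1 → dist (c s) (c t) ≤ φ t - φ s := by
    intro s t h0 hst h1
    have hb : BoundedVariationOn c (Icc s t) := hEfin h0 h1
    have := hb.dist_le (left_mem_Icc.mpr hst) (right_mem_Icc.mpr hst)
    rw [hφadd h0 hst h1]
    linarith
  have hdist2 : ∀ {s t : ℝ}, 0 ≤ s → s ≤ t → t ≤ 1 →
      dist (c s) (c t) ≤ φ s + (L - φ t) := by
    intro s t h0 hst h1
    have htr : dist (c s) (c t) ≤ dist (c s) (c 0) + dist (c 0) (c t) :=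
      dist_triangle _ _ _
    have e1 : dist (c s) (c 0) ≤ φ s - φ 0 := by
      rw [dist_comm]
      exact hdist1 le_rfl h0 (le_trans hst h1)
    have e2 : dist (c 0) (c t) ≤ L - φ t := by
      rw [hcl, dist_comm]
      exact hdist1 (le_trans h0 hst) h1 le_rfl
    linarith [hφ0]
  have hGdist : ∀ {w₁ w₂ : ℝ}, w₁ ∈ Icc 0 L → w₂ ∈ Icc 0 L → w₁ ≤ w₂ →
      dist (c (ψ w₁)) (c (ψ w₂)) ≤ min (w₂ - w₁) (w₁ + (L - w₂)) := by
    intro w₁ w₂ hw₁ hw₂ h12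
    obtain ⟨ht₁, hp₁⟩ := hψ w₁ hw₁
    obtain ⟨ht₂, hp₂⟩ := hψ w₂ hw₂
    rcases le_or_gt (ψ w₁) (ψ w₂) with h | h
    · refine le_min ?_ ?_
      · have h' := hdist1 ht₁.1 h ht₂.2
        rwa [hp₁, hp₂] at h'
      · have h' := hdist2 ht₁.1 h ht₂.2
        rwa [hp₁, hp₂] at h'
    · have hle : w₂ ≤ w₁ := by
        rw [← hp₁, ← hp₂]; exact hφmono ht₂.1 h.le ht₁.2
      have hww : w₁ = w₂ := le_antisymm h12 hle
      subst hww
      exact absurd h (lt_irrefl _)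
  have hψpos : ∀ {w : ℝ}, w ∈ Icc 0 L → 0 < w → 0 < ψ w := by
    intro w hw hw0
    obtain ⟨ht, hp⟩ := hψ w hw
    rcases eq_or_lt_of_le ht.1 with h | h
    · rw [← h] at hp
      rw [hφ0] at hp
      linarith
    · exact h
  -- complex identification of the circle
  set zc : Circle' → ℂ := fun z => (z.1 0 : ℂ) + (z.1 1 : ℂ) * Complex.I with hzc
  have habs : ∀ z : Circle', ‖zc z‖ = 1 := by
    intro z
    have hz : ‖(z.1 : EuclideanSpace ℝ (Fin 2))‖ = 1 := by
      simpa using mem_sphere_zero_iff_norm.mp z.2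
    rw [EuclideanSpace.norm_eq, Fin.sum_univ_two] at hz
    rw [hzc]
    dsimp only
    rw [Complex.norm_def, Complex.normSq_add_mul_I]
    simpa [Real.norm_eq_abs, sq_abs] using hz
  have hdistz : ∀ z w : Circle', dist z w = ‖zc z - zc w‖ := by
    intro z w
    rw [Subtype.dist_eq, EuclideanSpace.dist_eq, Fin.sum_univ_two]
    have hsub : zc z - zc w
        = ((z.1 0 - w.1 0 : ℝ) : ℂ) + ((z.1 1 - w.1 1 : ℝ) : ℂ) * Complex.I := by
      rw [hzc]; push_cast; ring
    rw [hsub, Complex.norm_def, Complex.normSq_add_mul_I]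
    simp [Real.dist_eq, sq_abs]
  have hinjz : ∀ z w : Circle', zc z = zc w → z = w := by
    intro z w h
    apply Subtype.ext
    ext i
    fin_cases i
    · have := congrArg Complex.re h
      simpa [hzc] using this
    · have := congrArg Complex.im h
      simpa [hzc] using this
  have hzexp : ∀ z : Circle', zc z = Complex.exp ((Complex.arg (zc z) : ℝ) * Complex.I) := by
    intro z
    have h := Complex.norm_mul_exp_arg_mul_I (zc z)
    rw [habs z] at h
    simpa using h.symm
  set θ : Circle' → ℝ := fun z => Complex.arg (zc z) with hθ
  have hzexp' : ∀ z : Circle', zc z = Complex.exp ((θ z : ℝ) * Complex.I) := hzexp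
  set wf : Circle' → ℝ := fun z => L * ((θ z + Real.pi) / (2 * Real.pi)) with hwf
  have hθmem : ∀ z, θ z ∈ Ioc (-Real.pi) Real.pi :=
    fun z => ⟨Complex.neg_pi_lt_arg _, Complex.arg_le_pi _⟩
  have hwmem : ∀ z, wf z ∈ Ioc 0 L := by
    intro z
    have h1 := (hθmem z).1
    have h2 := (hθmem z).2
    constructor
    · apply mul_pos hLpos
      apply div_pos (by linarith) (by linarith)
    · rw [hwf]
      dsimp only
      rw [show L * ((θ z + Real.pi) / (2 * Real.pi)) = L * (θ z + Real.pi) / (2 * Real.pi) by ring]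
      rw [div_le_iff₀ (by linarith)]
      nlinarith
  have hwmem' : ∀ z, wf z ∈ Icc 0 L := fun z => Ioc_subset_Icc_self (hwmem z)
  refine ⟨Real.toNNReal L, fun z => c (ψ (wf z)), ?_, ?_⟩
  · -- injectivity
    intro z₁ z₂ h
    dsimp only at h
    obtain ⟨ht₁, hp₁⟩ := hψ _ (hwmem' z₁)
    obtain ⟨ht₂, hp₂⟩ := hψ _ (hwmem' z₂)
    have h1pos : 0 < ψ (wf z₁) := hψpos (hwmem' z₁) (hwmem z₁).1
    have h2pos : 0 < ψ (wf z₂) := hψpos (hwmem' z₂) (hwmem z₂).1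
    have hteq : ψ (wf z₁) = ψ (wf z₂) := by
      rcases eq_or_lt_of_le ht₁.2 with he₁ | he₁
      · rcases eq_or_lt_of_le ht₂.2 with he₂ | he₂
        · rw [he₁, he₂]
        · exfalso
          rw [he₁, ← hcl] at h
          have := hinj (⟨le_rfl, one_pos⟩ : (0:ℝ) ∈ Ico (0:ℝ) 1)
            (⟨ht₂.1, he₂⟩ : ψ (wf z₂) ∈ Ico (0:ℝ) 1) h
          linarith
      · rcases eq_or_lt_of_le ht₂.2 with he₂ | he₂
        · exfalso
          rw [he₂, ← hcl] at h
          have := hinj (⟨ht₁.1, he₁⟩ : ψ (wf z₁) ∈ Ico (0:ℝ) 1)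
            (⟨le_rfl, one_pos⟩ : (0:ℝ) ∈ Ico (0:ℝ) 1) h
          linarith
        · exact hinj ⟨ht₁.1, he₁⟩ ⟨ht₂.1, he₂⟩ h
    have hweq : wf z₁ = wf z₂ := by
      rw [← hp₁, ← hp₂, hteq]
    have hθeq : θ z₁ = θ z₂ := by
      rw [hwf] at hweq
      dsimp only at hweq
      have h2π : (2 * Real.pi) ≠ 0 := by positivity
      field_simp at hweq
      linarith
    apply hinjz
    rw [hzexp' z₁, hzexp' z₂, hθeq]
  · -- Lipschitz
    rw [lipschitzWith_iff_dist_le_mul]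
    have hK : ((Real.toNNReal L : ℝ≥0) : ℝ) = L := Real.coe_toNNReal L hLpos.le
    suffices key : ∀ z₁ z₂ : Circle', wf z₁ ≤ wf z₂ →
        dist (c (ψ (wf z₁))) (c (ψ (wf z₂))) ≤ L * dist z₁ z₂ by
      intro z₁ z₂
      rw [hK]
      rcases le_total (wf z₁) (wf z₂) with h | h
      · exact key _ _ h
      · rw [dist_comm, dist_comm z₁ z₂]
        exact key _ _ h
    intro z₁ z₂ h12
    have hG := hGdist (hwmem' z₁) (hwmem' z₂) h12
    have hθle : θ z₁ ≤ θ z₂ := by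
      by_contra hcon
      push_neg at hcon
      have h2π : (0:ℝ) < 2 * Real.pi := by linarith
      have hlt : wf z₂ < wf z₁ := by
        rw [hwf]
        dsimp only
        apply mul_lt_mul_of_pos_left _ hLpos
        exact (div_lt_div_iff_of_pos_right h2π).mpr (by linarith)
      linarith
    set d := θ z₂ - θ z₁ with hdd
    have hd0 : 0 ≤ d := by linarith
    have hmineq : min (wf z₂ - wf z₁) (wf z₁ + (L - wf z₂))
        = (L / (2 * Real.pi)) * min d (2 * Real.pi - d) := by
      have e1 : wf z₂ - wf z₁ = (L / (2 * Real.pi)) * d := by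
        rw [hwf]; dsimp only; field_simp; ring
      have e2 : wf z₁ + (L - wf z₂) = (L / (2 * Real.pi)) * (2 * Real.pi - d) := by
        rw [hwf]; dsimp only; field_simp; ring
      rw [e1, e2, ← mul_min_of_nonneg _ _ (by positivity : (0:ℝ) ≤ L / (2 * Real.pi))]
    have hchord := chord_angle_bound (hθmem z₁) (hθmem z₂)
    have habs' : |θ z₁ - θ z₂| = d := by
      rw [abs_sub_comm, abs_of_nonneg hd0]
    rw [habs'] at hchord
    have hdzz : dist z₁ z₂
        = ‖Complex.exp ((θ z₁ : ℝ) * Complex.I)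
          - Complex.exp ((θ z₂ : ℝ) * Complex.I)‖ := by
      rw [hdistz z₁ z₂, hzexp' z₁, hzexp' z₂]
    set Q := ‖Complex.exp ((θ z₁ : ℝ) * Complex.I)
      - Complex.exp ((θ z₂ : ℝ) * Complex.I)‖ with hQdef
    have hQ0 : 0 ≤ Q := norm_nonneg _
    calc dist (c (ψ (wf z₁))) (c (ψ (wf z₂)))
        ≤ min (wf z₂ - wf z₁) (wf z₁ + (L - wf z₂)) := hG
      _ = (L / (2 * Real.pi)) * min d (2 * Real.pi - d) := hmineq
      _ ≤ (L / (2 * Real.pi)) * ((Real.pi / 2) * Q) := by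
          apply mul_le_mul_of_nonneg_left hchord (by positivity)
      _ = (L / 4) * Q := by field_simp; ring
      _ ≤ L * Q := by nlinarith
      _ = L * dist z₁ z₂ := by rw [hdzz]
lemma glue_loop {X : Type*} [MetricSpace X] {c₁ c₂ : ℝ → X} {u v a b : ℝ}
    (huv : u < v) (hab : a < b)
    (h1c : ContinuousOn c₁ (Icc u v)) (h1i : Set.InjOn c₁ (Icc u v))
    (h1f : eVariationOn c₁ (Icc u v) ≠ ⊤)
    (h2c : ContinuousOn c₂ (Icc a b)) (h2i : Set.InjOn c₂ (Icc a b))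
    (h2f : eVariationOn c₂ (Icc a b) ≠ ⊤)
    (hua : c₁ u = c₂ a) (hvb : c₁ v = c₂ b)
    (hdisj : ∀ t ∈ Ioo a b, c₂ t ∉ c₁ '' Icc u v) :
    ∃ (K : ℝ≥0) (α : Circle' → X), Function.Injective α ∧ LipschitzWith K α := by
  classical
  set p : ℝ → ℝ := fun t => u + (v - u) * (2 * t) with hp
  set q : ℝ → ℝ := fun t => b + (a - b) * (2 * t - 1) with hq
  set c : ℝ → X := fun t => if t ≤ 1/2 then c₁ (p t) else c₂ (q t) with hcdef
  have huv' : (0:ℝ) < v - u := sub_pos.mpr huv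
  have hab' : (0:ℝ) < b - a := sub_pos.mpr hab
  have hpmaps : ∀ t ∈ Icc (0:ℝ) (1/2), p t ∈ Icc u v := by
    intro t ht
    rw [hp]; dsimp only
    constructor
    · nlinarith [ht.1]
    · nlinarith [ht.2]
  have hqmaps : ∀ t ∈ Icc (1/2:ℝ) 1, q t ∈ Icc a b := by
    intro t ht
    rw [hq]; dsimp only
    constructor
    · nlinarith [ht.2]
    · nlinarith [ht.1]
  have hc12 : c₁ (p (1/2)) = c₂ (q (1/2)) := by
    rw [hp, hq]
    dsimp only
    norm_num
    exact hvb
  have hceq1 : EqOn c (fun t => c₁ (p t)) (Icc 0 (1/2)) := by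
    intro t ht
    rw [hcdef]
    dsimp only
    rw [if_pos ht.2]
  have hceq2 : EqOn c (fun t => c₂ (q t)) (Icc (1/2) 1) := by
    intro t ht
    rw [hcdef]
    dsimp only
    rcases eq_or_lt_of_le ht.1 with h | h
    · rw [if_pos (le_of_eq h.symm), ← h]
      exact hc12
    · rw [if_neg (not_le.mpr h)]
  have hce1 : ∀ t ∈ Icc (0:ℝ) (1/2), c t = c₁ (p t) := hceq1
  have hce2 : ∀ t ∈ Icc (1/2:ℝ) 1, c t = c₂ (q t) := hceq2
  have hpc : Continuous p := by rw [hp]; fun_prop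
  have hqc : Continuous q := by rw [hq]; fun_prop
  have hccont : ContinuousOn c (Icc 0 1) := by
    rw [show Icc (0:ℝ) 1 = Icc 0 (1/2) ∪ Icc (1/2) 1 from
      (Icc_union_Icc_eq_Icc (by norm_num) (by norm_num)).symm]
    apply continuousOn_union_closed isClosed_Icc isClosed_Icc
    · exact (h1c.comp hpc.continuousOn hpmaps).congr hceq1
    · exact (h2c.comp hqc.continuousOn hqmaps).congr hceq2
  have hinjc : Set.InjOn c (Ico 0 1) := by
    intro s hs t ht hst
    rcases le_or_gt s (1/2) with h1 | h1 <;> rcases le_or_gt t (1/2) with h2 | h2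
    · have hst' : c₁ (p s) = c₁ (p t) := by
        rw [← hce1 s ⟨hs.1, h1⟩, ← hce1 t ⟨ht.1, h2⟩]
        exact hst
      have hpp := h1i (hpmaps s ⟨hs.1, h1⟩) (hpmaps t ⟨ht.1, h2⟩) hst'
      rw [hp] at hpp
      dsimp only at hpp
      have h3 : (v - u) * (2 * s) = (v - u) * (2 * t) := by linarith
      have := mul_left_cancel₀ huv'.ne' h3
      linarith
    · exfalso
      have hqt : q t ∈ Ioo a b := by
        rw [hq]; dsimp only
        constructor
        · nlinarith [mul_pos hab' (show (0:ℝ) < 2 - 2*t by linarith [ht.2])]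
        · nlinarith [mul_pos hab' (show (0:ℝ) < 2*t - 1 by linarith [h2])]
      apply hdisj _ hqt
      refine ⟨p s, hpmaps s ⟨hs.1, h1⟩, ?_⟩
      rw [← hce1 s ⟨hs.1, h1⟩, hst, hce2 t ⟨h2.le, ht.2.le⟩]
    · exfalso
      have hqs : q s ∈ Ioo a b := by
        rw [hq]; dsimp only
        constructor
        · nlinarith [mul_pos hab' (show (0:ℝ) < 2 - 2*s by linarith [hs.2])]
        · nlinarith [mul_pos hab' (show (0:ℝ) < 2*s - 1 by linarith [h1])]
      apply hdisj _ hqs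
      refine ⟨p t, hpmaps t ⟨ht.1, h2⟩, ?_⟩
      rw [← hce1 t ⟨ht.1, h2⟩, ← hst, hce2 s ⟨h1.le, hs.2.le⟩]
    · have hst' : c₂ (q s) = c₂ (q t) := by
        rw [← hce2 s ⟨h1.le, hs.2.le⟩, ← hce2 t ⟨h2.le, ht.2.le⟩]
        exact hst
      have hqq := h2i (hqmaps s ⟨h1.le, hs.2.le⟩) (hqmaps t ⟨h2.le, ht.2.le⟩) hst'
      rw [hq] at hqq
      dsimp only at hqq
      have h3 : (a - b) * (2 * s - 1) = (a - b) * (2 * t - 1) := by linarith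
      have := mul_left_cancel₀ (show a - b ≠ 0 by linarith) h3
      linarith
  have hclose : c 0 = c 1 := by
    have h0 : c 0 = c₁ (p 0) := hce1 0 ⟨le_rfl, by norm_num⟩
    have h1' : c 1 = c₂ (q 1) := hce2 1 ⟨by norm_num, le_rfl⟩
    rw [h0, h1', hp, hq]
    dsimp only
    norm_num
    exact hua
  have hfinc : eVariationOn c (Icc 0 1) ≠ ⊤ := by
    have hsplit := eVariationOn.Icc_add_Icc c (s := univ)
      (show (0:ℝ) ≤ 1/2 by norm_num) (show (1:ℝ)/2 ≤ 1 by norm_num) (mem_univ _)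
    simp only [univ_inter] at hsplit
    rw [← hsplit]
    have hA : eVariationOn c (Icc 0 (1/2)) ≤ eVariationOn c₁ (Icc u v) := by
      rw [eVariationOn.eq_of_eqOn hceq1]
      exact eVariationOn.comp_le_of_monotoneOn c₁ p
        (fun x _ y _ hxy => by rw [hp]; dsimp only; nlinarith) hpmaps
    have hB : eVariationOn c (Icc (1/2) 1) ≤ eVariationOn c₂ (Icc a b) := by
      rw [eVariationOn.eq_of_eqOn hceq2]
      exact eVariationOn.comp_le_of_antitoneOn c₂ q
        (fun x _ y _ hxy => by rw [hq]; dsimp only; nlinarith) hqmaps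
    exact ENNReal.add_ne_top.mpr ⟨ne_top_of_le_ne_top h1f hA, ne_top_of_le_ne_top h2f hB⟩
  exact loop_to_lipschitz_circle hccont hinjc hclose hfinc
lemma main_aux {X : Type*} [MetricSpace X] {x y : X} {Γ₁ Γ₂ : Set X}
    (h₁ : IsRectArc Γ₁ x y) (h₂ : IsRectArc Γ₂ x y) (hp : ∃ p, p ∈ Γ₂ ∧ p ∉ Γ₁) :
    ∃ (K : ℝ≥0) (α : Circle' → X), Function.Injective α ∧ LipschitzWith K α := by
  classical
  obtain ⟨γ₁, ⟨h1c, h10, h11⟩, h1i, h1im, h1f⟩ := h₁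
  obtain ⟨γ₂, ⟨h2c, h20, h21⟩, h2i, h2im, h2f⟩ := h₂
  obtain ⟨p, hpΓ₂, hpΓ₁⟩ := hp
  have hΓ₁closed : IsClosed Γ₁ := by
    rw [← h1im]
    exact (isCompact_Icc.image_of_continuousOn h1c).isClosed
  rw [← h2im] at hpΓ₂
  obtain ⟨t₀, ht₀, hpt₀⟩ := hpΓ₂
  have hxΓ₁ : γ₂ 0 ∈ Γ₁ := by
    rw [h20, ← h10, ← h1im]
    exact ⟨0, left_mem_Icc.mpr zero_le_one, rfl⟩
  have hyΓ₁ : γ₂ 1 ∈ Γ₁ := by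
    rw [h21, ← h11, ← h1im]
    exact ⟨1, right_mem_Icc.mpr zero_le_one, rfl⟩
  set S₁ : Set ℝ := Icc 0 t₀ ∩ γ₂ ⁻¹' Γ₁ with hS₁
  have hS₁closed : IsClosed S₁ :=
    ContinuousOn.preimage_isClosed_of_isClosed (h2c.mono (Icc_subset_Icc le_rfl ht₀.2))
      isClosed_Icc hΓ₁closed
  have hS₁ne : S₁.Nonempty := ⟨0, ⟨le_rfl, ht₀.1⟩, hxΓ₁⟩
  have hS₁bdd : BddAbove S₁ := BddAbove.mono inter_subset_left bddAbove_Icc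
  set a := sSup S₁ with ha
  have haS₁ : a ∈ S₁ := IsClosed.csSup_mem hS₁closed hS₁ne hS₁bdd
  have haΓ₁ : γ₂ a ∈ Γ₁ := haS₁.2
  have hat₀ : a < t₀ :=
    lt_of_le_of_ne haS₁.1.2 (fun h => hpΓ₁ (by rw [← hpt₀, ← h]; exact haΓ₁))
  have ha0 : 0 ≤ a := haS₁.1.1
  have hafter : ∀ t, a < t → t ≤ t₀ → γ₂ t ∉ Γ₁ := by
    intro t h1 h2 hmem
    have h3 : t ∈ S₁ := ⟨⟨by linarith, h2⟩, hmem⟩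
    exact absurd (le_csSup hS₁bdd h3) (not_le.mpr h1)
  set S₂ : Set ℝ := Icc t₀ 1 ∩ γ₂ ⁻¹' Γ₁ with hS₂
  have hS₂closed : IsClosed S₂ :=
    ContinuousOn.preimage_isClosed_of_isClosed (h2c.mono (Icc_subset_Icc ht₀.1 le_rfl))
      isClosed_Icc hΓ₁closed
  have hS₂ne : S₂.Nonempty := ⟨1, ⟨ht₀.2, le_rfl⟩, hyΓ₁⟩
  have hS₂bdd : BddBelow S₂ := BddBelow.mono inter_subset_left bddBelow_Icc
  set b := sInf S₂ with hb
  have hbS₂ : b ∈ S₂ := IsClosed.csInf_mem hS₂closed hS₂ne hS₂bdd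
  have hbΓ₁ : γ₂ b ∈ Γ₁ := hbS₂.2
  have hbt₀ : t₀ < b :=
    lt_of_le_of_ne hbS₂.1.1 (fun h => hpΓ₁ (by rw [← hpt₀, h]; exact hbΓ₁))
  have hb1 : b ≤ 1 := hbS₂.1.2
  have hbefore : ∀ t, t₀ ≤ t → t < b → γ₂ t ∉ Γ₁ := by
    intro t h1 h2 hmem
    exact absurd (csInf_le hS₂bdd ⟨⟨h1, by linarith⟩, hmem⟩) (not_le.mpr h2)
  have hmid : ∀ t ∈ Ioo a b, γ₂ t ∉ Γ₁ := by
    intro t ht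
    rcases le_or_gt t t₀ with h | h
    · exact hafter t ht.1 h
    · exact hbefore t h.le ht.2
  have hab : a < b := lt_trans hat₀ hbt₀
  have hIccab : Icc a b ⊆ Icc (0:ℝ) 1 := Icc_subset_Icc ha0 hb1
  obtain ⟨u₀, hu₀I, hu₀⟩ : ∃ u₀ ∈ Icc (0:ℝ) 1, γ₁ u₀ = γ₂ a := by
    have h' := haΓ₁
    rw [← h1im] at h'
    obtain ⟨u₀, hm, he⟩ := h'
    exact ⟨u₀, hm, he⟩
  obtain ⟨v₀, hv₀I, hv₀⟩ : ∃ v₀ ∈ Icc (0:ℝ) 1, γ₁ v₀ = γ₂ b := by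
    have h' := hbΓ₁
    rw [← h1im] at h'
    obtain ⟨v₀, hm, he⟩ := h'
    exact ⟨v₀, hm, he⟩
  have hne' : u₀ ≠ v₀ := by
    intro h
    have he : γ₂ a = γ₂ b := by rw [← hu₀, h, hv₀]
    have := h2i (hIccab (left_mem_Icc.mpr hab.le)) (hIccab (right_mem_Icc.mpr hab.le)) he
    linarith
  rcases lt_or_gt_of_ne hne' with huv | hvu
  · have hsubuv : Icc u₀ v₀ ⊆ Icc (0:ℝ) 1 := Icc_subset_Icc hu₀I.1 hv₀I.2
    exact glue_loop huv hab
      (h1c.mono hsubuv) (h1i.mono hsubuv)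
      (ne_top_of_le_ne_top h1f (eVariationOn.mono γ₁ hsubuv))
      (h2c.mono hIccab) (h2i.mono hIccab)
      (ne_top_of_le_ne_top h2f (eVariationOn.mono γ₂ hIccab))
      hu₀ hv₀
      (fun t ht hmem => hmid t ht (by
        rw [← h1im]
        exact (image_mono (f := γ₁) hsubuv) hmem))
  · have hsubvu : Icc v₀ u₀ ⊆ Icc (0:ℝ) 1 := Icc_subset_Icc hv₀I.1 hu₀I.2
    have hrmaps : ∀ t ∈ Icc a b, a + b - t ∈ Icc a b := by
      intro t ht
      exact ⟨by linarith [ht.2], by linarith [ht.1]⟩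
    have hrim : (fun t => a + b - t) '' Icc a b = Icc a b := by
      have := Set.image_const_sub_Icc (a := a + b) (b := a) (c := b)
      simpa using this
    refine glue_loop hvu hab (c₂ := fun t => γ₂ (a + b - t))
      (h1c.mono hsubvu) (h1i.mono hsubvu)
      (ne_top_of_le_ne_top h1f (eVariationOn.mono γ₁ hsubvu))
      ?_ ?_ ?_ ?_ ?_ ?_
    · exact ContinuousOn.comp (h2c.mono hIccab)
        ((continuous_const.sub continuous_id).continuousOn) hrmaps
    · intro s hs t ht h
      have := h2i (hIccab (hrmaps s hs)) (hIccab (hrmaps t ht)) h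
      linarith
    · show eVariationOn (γ₂ ∘ fun t => a + b - t) (Icc a b) ≠ ⊤
      rw [eVariationOn.comp_eq_of_antitoneOn γ₂ (fun t => a + b - t)
          (t := Icc a b) (fun x _ y _ hxy => by dsimp only; linarith), hrim]
      exact ne_top_of_le_ne_top h2f (eVariationOn.mono γ₂ hIccab)
    · show γ₁ v₀ = γ₂ (a + b - a)
      rw [show a + b - a = b by ring]
      exact hv₀
    · show γ₁ u₀ = γ₂ (a + b - b)
      rw [show a + b - b = a by ring]
      exact hu₀
    · intro t ht hmem
      refine hmid (a + b - t) ⟨by linarith [ht.2], by linarith [ht.1]⟩ ?_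
      rw [← h1im]
      exact (image_mono (f := γ₁) hsubvu) hmem


/-- If `Γ₁ ≠ Γ₂` are rectifiable arcs connecting the same endpoints, then there is a
one-to-one Lipschitz map `α : S¹ → X`. -/
theorem exists_injective_lipschitz_circle {X : Type*} [MetricSpace X] (x y : X)
    (Γ₁ Γ₂ : Set X) (h₁ : IsRectArc Γ₁ x y) (h₂ : IsRectArc Γ₂ x y) (hne : Γ₁ ≠ Γ₂) :
    ∃ (K : ℝ≥0) (α : Circle' → X), Function.Injective α ∧ LipschitzWith K α := by
  by_cases h : ∃ p, p ∈ Γ₂ ∧ p ∉ Γ₁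
  · exact main_aux h₁ h₂ h
  · push_neg at h
    have h' : ∃ p, p ∈ Γ₁ ∧ p ∉ Γ₂ := by
      by_contra h''
      push_neg at h''
      exact hne (Set.Subset.antisymm h'' h)
    exact main_aux h₂ h₁ h'
end
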